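/- arXiv:math/0201011 — 11 statements merged into one kernel-verified Lean document; each statement's English description precedes it below -/
import Mathlib

section
/- Let m ≥ 1 be an integer, n ≥ m+2 an integer, and s a real number with s > m+1. Then the cone SMET^{m,s}_n contains only the zero vector. -/
/-- `V n` is the vertex set `{1, …, n}`. -/
def V (n : ℕ) : Finset ℕ := Finset.Icc 1 n

/-- `sigmaT d T = Σ_{k ∈ T} d (T \\ {k})`. -/
def sigmaT (d : Finset ℕ → ℝ) (T : Finset ℕ) : ℝ := ∑ k ∈ T, d (T.erase k)

/-- Membership in the cone `SMET m n s` of `(m,s)`-super-metrics: nonnegativity on every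
`(m+1)`-subset of `V n`, and the `(m,s)`-simplex inequalities for every `(m+2)`-subset `T`
of `V n` and every `i ∈ T`. -/
def inSMET (m n : ℕ) (s : ℝ) (d : Finset ℕ → ℝ) : Prop :=
  (∀ S ⊆ V n, S.card = m + 1 → 0 ≤ d S) ∧
  (∀ T ⊆ V n, T.card = m + 2 → ∀ i ∈ T, (s + 1) * d (T.erase i) ≤ sigmaT d T)

/-- For `s > m + 1` the cone of `(m,s)`-super-metrics contains only the zero vector. -/
theorem smet_collapses_to_zero (m n : ℕ) (hm : 1 ≤ m) (hn : m + 2 ≤ n)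
    (s : ℝ) (hs : (m : ℝ) + 1 < s)
    (d : Finset ℕ → ℝ) (hd : inSMET m n s d) :
    ∀ S ⊆ V n, S.card = m + 1 → d S = 0 := by
  obtain ⟨hnn, hsim⟩ := hd
  intro S hS hScard
  -- extend S to a set T of card m+2 inside V n
  have hcardV : (V n).card = n := by simp [V]
  have hlt : S.card < (V n).card := by omega
  obtain ⟨x, hxV, hxS⟩ : ∃ x ∈ V n, x ∉ S := by
    by_contra h
    push_neg at h
    have := Finset.card_le_card h
    omega
  set T := insert x S with hT
  have hTsub : T ⊆ V n := Finset.insert_subset hxV hS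
  have hTcard : T.card = m + 2 := by
    rw [hT, Finset.card_insert_of_notMem hxS]; omega
  have hTerase : T.erase x = S := Finset.erase_insert hxS
  -- each erase is a nonneg value
  have herase_nn : ∀ k ∈ T, 0 ≤ d (T.erase k) := by
    intro k hk
    exact hnn _ ((Finset.erase_subset _ _).trans hTsub)
      (by rw [Finset.card_erase_of_mem hk, hTcard]; omega)
  have hsig_nn : 0 ≤ sigmaT d T := Finset.sum_nonneg herase_nn
  -- sum simplex inequalities over i ∈ T
  have hsum : (s + 1) * sigmaT d T ≤ (m + 2 : ℝ) * sigmaT d T := by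
    have h1 : ∑ i ∈ T, (s + 1) * d (T.erase i) ≤ ∑ _i ∈ T, sigmaT d T :=
      Finset.sum_le_sum (fun i hi => hsim T hTsub hTcard i hi)
    rw [← Finset.mul_sum] at h1
    rw [Finset.sum_const, hTcard, nsmul_eq_mul] at h1
    push_cast at h1 ⊢
    simpa [sigmaT] using h1
  have hsig_le : sigmaT d T ≤ 0 := by nlinarith
  have hsig0 : sigmaT d T = 0 := le_antisymm hsig_le hsig_nn
  have hkey := hsim T hTsub hTcard x (Finset.mem_insert_self x S)
  rw [hTerase, hsig0] at hkey
  have hdS : 0 ≤ d S := hnn S hS hScard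
  nlinarith
end

section
/- Let m ≥ 1 and n ≥ m+2 be integers and let s = m+1. Then the cone SMET^{m,m+1}_n is exactly the set of nonnegative multiples of the all-ones vector, i.e. d ∈ SMET^{m,m+1}_n if and only if there exists λ ≥ 0 with d(S) = λ for every (m+1)-subset S of V_n. -/
/-- For `s = m + 1` the cone of `(m,s)`-super-metrics is exactly the set of nonnegative
multiples of the all-ones vector. -/
theorem smet_collapses_to_allones (m n : ℕ) (hm : 1 ≤ m) (hn : m + 2 ≤ n)
    (d : Finset ℕ → ℝ) :
    inSMET m n ((m : ℝ) + 1) d ↔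
      ∃ lam : ℝ, 0 ≤ lam ∧ ∀ S ⊆ V n, S.card = m + 1 → d S = lam := by
  have hVcard : (V n).card = n := by simp [V]
  constructor
  · rintro ⟨hpos, hineq⟩
    -- step 1: equality in every simplex inequality
    have key : ∀ T ⊆ V n, T.card = m + 2 → ∀ i ∈ T,
        ((m : ℝ) + 2) * d (T.erase i) = sigmaT d T := by
      intro T hT hcard
      by_contra h
      push_neg at h
      obtain ⟨i, hi, hne⟩ := h
      have hle : ∀ k ∈ T, ((m : ℝ) + 2) * d (T.erase k) ≤ sigmaT d T := by
        intro k hk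
        have := hineq T hT hcard k hk
        linarith
      have hlt : ((m : ℝ) + 2) * d (T.erase i) < sigmaT d T :=
        lt_of_le_of_ne (hle i hi) hne
      have hsum : ∑ k ∈ T, ((m : ℝ) + 2) * d (T.erase k) < ∑ k ∈ T, sigmaT d T :=
        Finset.sum_lt_sum (fun k hk => hle k hk) ⟨i, hi, hlt⟩
      rw [← Finset.mul_sum, Finset.sum_const, hcard] at hsum
      have : (m + 2) • sigmaT d T = ((m : ℝ) + 2) * sigmaT d T := by
        rw [nsmul_eq_mul]; push_cast; ring
      rw [this] at hsum
      unfold sigmaT at hsum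
      linarith
    -- step 2: within one simplex all facets are equal
    have step : ∀ T ⊆ V n, T.card = m + 2 → ∀ i ∈ T, ∀ j ∈ T,
        d (T.erase i) = d (T.erase j) := by
      intro T hT hcard i hi j hj
      have h1 := key T hT hcard i hi
      have h2 := key T hT hcard j hj
      have hne : ((m : ℝ) + 2) ≠ 0 := by positivity
      exact mul_left_cancel₀ hne (by rw [h1, h2])
    -- step 3: d is constant on (m+1)-subsets, by induction on |S₁ \ S₂|
    have const : ∀ k : ℕ, ∀ S₁ ⊆ V n, ∀ S₂ ⊆ V n, S₁.card = m + 1 → S₂.card = m + 1 →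
        (S₁ \ S₂).card = k → d S₁ = d S₂ := by
      intro k
      induction k with
      | zero =>
        intro S₁ h₁ S₂ h₂ hc₁ hc₂ hk
        have hsub : S₁ ⊆ S₂ := by
          rw [Finset.card_eq_zero, Finset.sdiff_eq_empty_iff_subset] at hk
          exact hk
        have : S₁ = S₂ := Finset.eq_of_subset_of_card_le hsub (by omega)
        rw [this]
      | succ k ih =>
        intro S₁ h₁ S₂ h₂ hc₁ hc₂ hk
        have ha : (S₁ \ S₂).Nonempty := by
          rw [← Finset.card_pos, hk]; omega
        obtain ⟨a, hamem⟩ := ha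
        have haS₁ : a ∈ S₁ := (Finset.mem_sdiff.1 hamem).1
        have haS₂ : a ∉ S₂ := (Finset.mem_sdiff.1 hamem).2
        have hb : (S₂ \ S₁).Nonempty := by
          rw [← Finset.card_pos]
          have e1 : (S₁ \ S₂).card + (S₁ ∩ S₂).card = S₁.card :=
            Finset.card_sdiff_add_card_inter S₁ S₂
          have e2 : (S₂ \ S₁).card + (S₂ ∩ S₁).card = S₂.card :=
            Finset.card_sdiff_add_card_inter S₂ S₁
          rw [Finset.inter_comm] at e2
          omega
        obtain ⟨b, hbmem⟩ := hb
        have hbS₂ : b ∈ S₂ := (Finset.mem_sdiff.1 hbmem).1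
        have hbS₁ : b ∉ S₁ := (Finset.mem_sdiff.1 hbmem).2
        have hab : a ≠ b := fun h => hbS₁ (h ▸ haS₁)
        set T : Finset ℕ := insert b S₁ with hT
        have hTsub : T ⊆ V n := by
          intro x hx
          rcases Finset.mem_insert.1 hx with h | h
          · exact h₂ (h ▸ hbS₂)
          · exact h₁ h
        have hTcard : T.card = m + 2 := by
          rw [hT, Finset.card_insert_of_notMem hbS₁, hc₁]
        have haT : a ∈ T := Finset.mem_insert_of_mem haS₁
        have hbT : b ∈ T := Finset.mem_insert_self b S₁
        have heb : T.erase b = S₁ := Finset.erase_insert hbS₁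
        set S₁' : Finset ℕ := insert b (S₁.erase a) with hS₁'
        have hea : T.erase a = S₁' := by
          rw [hT, hS₁', Finset.erase_insert_of_ne (Ne.symm hab)]
        have hd1 : d S₁ = d S₁' := by
          rw [← heb, ← hea]
          exact step T hTsub hTcard b hbT a haT
        have hS₁'sub : S₁' ⊆ V n := by
          intro x hx
          rcases Finset.mem_insert.1 hx with h | h
          · exact h₂ (h ▸ hbS₂)
          · exact h₁ (Finset.erase_subset a S₁ h)
        have hS₁'card : S₁'.card = m + 1 := by
          rw [hS₁', Finset.card_insert_of_notMem
            (fun h => hbS₁ (Finset.erase_subset a S₁ h)),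
            Finset.card_erase_of_mem haS₁, hc₁]
          omega
        have hsd : S₁' \ S₂ = (S₁ \ S₂).erase a := by
          ext x
          simp only [hS₁', Finset.mem_sdiff, Finset.mem_insert, Finset.mem_erase]
          constructor
          · rintro ⟨h | ⟨hxa, hx1⟩, hx2⟩
            · exact absurd (h ▸ hbS₂) hx2
            · exact ⟨hxa, hx1, hx2⟩
          · rintro ⟨hxa, hx1, hx2⟩
            exact ⟨Or.inr ⟨hxa, hx1⟩, hx2⟩
        have hsdcard : (S₁' \ S₂).card = k := by
          rw [hsd, Finset.card_erase_of_mem hamem, hk]; omega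

        rw [hd1]
        exact ih S₁' hS₁'sub S₂ h₂ hS₁'card hc₂ hsdcard
    -- pick a base (m+1)-subset
    obtain ⟨S₀, hS₀sub, hS₀card⟩ : ∃ S₀ ⊆ V n, S₀.card = m + 1 :=
      Finset.exists_subset_card_eq (by omega : m + 1 ≤ (V n).card)
    refine ⟨d S₀, hpos S₀ hS₀sub hS₀card, fun S hS hScard => ?_⟩
    exact const (S \ S₀).card S hS S₀ hS₀sub hScard hS₀card rfl
  · rintro ⟨lam, hlam, hconst⟩
    constructor
    · intro S hS hScard
      rw [hconst S hS hScard]; exact hlam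
    · intro T hT hTcard i hi
      have herase : ∀ k ∈ T, d (T.erase k) = lam := by
        intro k hk
        exact hconst (T.erase k) ((Finset.erase_subset k T).trans hT)
          (by rw [Finset.card_erase_of_mem hk, hTcard]; omega)
      have hs : sigmaT d T = ((m : ℝ) + 2) * lam := by
        unfold sigmaT
        rw [Finset.sum_congr rfl herase, Finset.sum_const, hTcard, nsmul_eq_mul]
        push_cast; ring
      rw [herase i hi, hs]
      linarith
end

section
/- Let m ≥ 1 and n ≥ m+2 be integers and let s be a real number with m ≤ s < m+1. If a real-valued function d on the (m+1)-element subsets of V_n satisfies all (m,s)-simplex inequalities, then d automatically satisfies all non-negativity inequalities, i.e. d(S) ≥ 0 for every (m+1)-subset S of V_n. -/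
/-- For `m ≤ s < m + 1`, the non-negativity inequalities are implied by the
`(m,s)`-simplex inequalities. -/
theorem simplex_implies_nonneg (m n : ℕ) (hm : 1 ≤ m) (hn : m + 2 ≤ n)
    (s : ℝ) (hs1 : (m : ℝ) ≤ s) (hs2 : s < (m : ℝ) + 1)
    (d : Finset ℕ → ℝ)
    (hd : ∀ T ⊆ V n, T.card = m + 2 → ∀ i ∈ T, (s + 1) * d (T.erase i) ≤ sigmaT d T) :
    ∀ S ⊆ V n, S.card = m + 1 → 0 ≤ d S := by
  intro S hSsub hScard
  -- find a vertex j ∈ V n not in S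
  have hVcard : (V n).card = n := by simp [V]
  have hcardlt : S.card < (V n).card := by omega
  have hss : S ⊂ V n := Finset.ssubset_iff_subset_ne.mpr ⟨hSsub, by
    intro h; rw [h, hVcard] at hScard; omega⟩
  obtain ⟨j, hjV, hjS⟩ := Finset.exists_of_ssubset hss
  set T : Finset ℕ := insert j S with hT
  have hTsub : T ⊆ V n := Finset.insert_subset hjV hSsub
  have hTcard : T.card = m + 2 := by
    rw [hT, Finset.card_insert_of_notMem hjS, hScard]
  have key : ∀ i ∈ T, (s + 1) * d (T.erase i) ≤ sigmaT d T := hd T hTsub hTcard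
  set σ : ℝ := sigmaT d T with hσdef
  -- σ ≥ 0
  have hsum : (s + 1) * σ ≤ ((m : ℝ) + 2) * σ := by
    have h1 : ∑ i ∈ T, (s + 1) * d (T.erase i) ≤ ∑ i ∈ T, σ :=
      Finset.sum_le_sum fun i hi => key i hi
    rw [← Finset.mul_sum, Finset.sum_const, hTcard, nsmul_eq_mul] at h1
    push_cast at h1
    exact h1
  have hσnonneg : 0 ≤ σ := by nlinarith
  -- decompose σ
  have hSerase : T.erase j = S := by
    rw [hT, Finset.erase_insert hjS]
  have hdecomp : σ = d S + ∑ k ∈ S, d (T.erase k) := by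
    rw [hσdef, sigmaT, hT, Finset.sum_insert hjS, ← hT, hSerase]
  -- bound the sum over S
  have hbound : (s + 1) * (∑ k ∈ S, d (T.erase k)) ≤ ((m : ℝ) + 1) * σ := by
    have h2 : ∑ k ∈ S, (s + 1) * d (T.erase k) ≤ ∑ k ∈ S, σ :=
      Finset.sum_le_sum fun k hk => key k (Finset.mem_insert_of_mem hk)
    rw [← Finset.mul_sum, Finset.sum_const, hScard, nsmul_eq_mul] at h2
    push_cast at h2
    linarith
  have hspos : 0 < s + 1 := by nlinarith [Nat.one_le_cast (α := ℝ) |>.mpr hm]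
  -- conclude
  nlinarith [mul_nonneg (le_of_lt hspos) hσnonneg, mul_nonneg (sub_nonneg.mpr hs1) hσnonneg]
end

section
/- Let m ≥ 2 and n ≥ m+3 be integers and let s be a real number with m−1 < s < m. Let A and B be (m+1)-element subsets of V_n with |A∩B| = m. If d ∈ SMET^{m,s}_n satisfies d(A) = 0 and d(B) = 0, then d((A∪B)∖{k}) = 0 for every k ∈ A∪B. (This is the content of the fact that for m−1 < s < m the non-negativity facets NN_A and NN_B with |A∩B| = m are non-adjacent in SMET^{m,s}_n.) -/
/-- For `m - 1 < s < m`, if `d` in the cone of `(m,s)`-super-metrics vanishes on two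
`(m+1)`-subsets `A` and `B` with `|A ∩ B| = m`, then `d` vanishes on all `(m+1)`-subsets
of `A ∪ B`. -/
theorem nn_nn_nonadjacent (m n : ℕ) (hm : 2 ≤ m) (hn : m + 3 ≤ n)
    (s : ℝ) (hs1 : (m : ℝ) - 1 < s) (hs2 : s < (m : ℝ))
    (A B : Finset ℕ) (hA : A ⊆ V n) (hB : B ⊆ V n)
    (hAcard : A.card = m + 1) (hBcard : B.card = m + 1) (hAB : (A ∩ B).card = m)
    (d : Finset ℕ → ℝ) (hd : inSMET m n s d) (hdA : d A = 0) (hdB : d B = 0) :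
    ∀ k ∈ A ∪ B, d ((A ∪ B).erase k) = 0 := by
  obtain ⟨hnn, hsimp⟩ := hd
  set T := A ∪ B with hT
  have hTsub : T ⊆ V n := Finset.union_subset hA hB
  have hTcard : T.card = m + 2 := by
    have h := Finset.card_union_add_card_inter A B
    rw [hAcard, hBcard, hAB] at h
    show (A ∪ B).card = m + 2
    omega
  have hkey : ∀ k ∈ T, k ∉ A ∩ B → d (T.erase k) = 0 := by
    intro k hk hkAB
    rcases Finset.mem_union.mp hk with hkA | hkB
    · have hkB' : k ∉ B := fun h => hkAB (Finset.mem_inter.mpr ⟨hkA, h⟩)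
      have hBsub : B ⊆ T.erase k := fun x hx =>
        Finset.mem_erase.mpr ⟨fun h => hkB' (h ▸ hx), Finset.mem_union_right _ hx⟩
      have hEq : B = T.erase k := Finset.eq_of_subset_of_card_le hBsub (by
        rw [Finset.card_erase_of_mem hk, hTcard, hBcard]; omega)
      rw [← hEq, hdB]
    · have hkA' : k ∉ A := fun h => hkAB (Finset.mem_inter.mpr ⟨h, hkB⟩)
      have hAsub : A ⊆ T.erase k := fun x hx =>
        Finset.mem_erase.mpr ⟨fun h => hkA' (h ▸ hx), Finset.mem_union_left _ hx⟩
      have hEq : A = T.erase k := Finset.eq_of_subset_of_card_le hAsub (by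
        rw [Finset.card_erase_of_mem hk, hTcard, hAcard]; omega)
      rw [← hEq, hdA]
  have hnonneg : ∀ k ∈ T, 0 ≤ d (T.erase k) := by
    intro k hk
    exact hnn _ ((Finset.erase_subset _ _).trans hTsub)
      (by rw [Finset.card_erase_of_mem hk, hTcard]; omega)
  have hSnn : 0 ≤ sigmaT d T := Finset.sum_nonneg hnonneg
  have hsub : A ∩ B ⊆ T := Finset.inter_subset_union
  have hsum : sigmaT d T = ∑ k ∈ A ∩ B, d (T.erase k) := by
    unfold sigmaT
    exact (Finset.sum_subset hsub (fun x hx hx' => hkey x hx hx')).symm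
  have hineq : (s + 1) * sigmaT d T ≤ (m : ℝ) * sigmaT d T := by
    calc (s + 1) * sigmaT d T = ∑ i ∈ A ∩ B, (s + 1) * d (T.erase i) := by
          rw [hsum, Finset.mul_sum]
      _ ≤ ∑ _i ∈ A ∩ B, sigmaT d T :=
          Finset.sum_le_sum (fun i hi => hsimp T hTsub hTcard i (hsub hi))
      _ = (m : ℝ) * sigmaT d T := by
          rw [Finset.sum_const, hAB, nsmul_eq_mul]
  have hS0 : sigmaT d T = 0 := by nlinarith
  have hall := (Finset.sum_eq_zero_iff_of_nonneg hnonneg).mp hS0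
  intro k hk
  exact hall k hk
end

section
/- Let m ≥ 2 and n ≥ m+3 be integers and let s = m−1. Let A and B be (m+1)-element subsets of V_n with |A∩B| = m. If d ∈ SMET^{m,m−1}_n satisfies d(A) = 0 and d(B) = 0, then m·d((A∪B)∖{k}) = Σ_{A∪B}(d) for every k ∈ A∩B; in particular all the values d((A∪B)∖{k}) with k ∈ A∩B are equal. -/
/-- For `s = m - 1`, if `d` in the cone of `(m,s)`-super-metrics vanishes on two
`(m+1)`-subsets `A` and `B` with `|A ∩ B| = m`, then `m * d ((A ∪ B).erase k)` equals
`sigmaT d (A ∪ B)` for every `k ∈ A ∩ B`; in particular all these values are equal. -/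
theorem nn_nn_boundary_case (m n : ℕ) (hm : 2 ≤ m) (hn : m + 3 ≤ n)
    (A B : Finset ℕ) (hA : A ⊆ V n) (hB : B ⊆ V n)
    (hAcard : A.card = m + 1) (hBcard : B.card = m + 1) (hAB : (A ∩ B).card = m)
    (d : Finset ℕ → ℝ) (hd : inSMET m n ((m : ℝ) - 1) d)
    (hdA : d A = 0) (hdB : d B = 0) :
    (∀ k ∈ A ∩ B, (m : ℝ) * d ((A ∪ B).erase k) = sigmaT d (A ∪ B)) ∧
    (∀ k ∈ A ∩ B, ∀ l ∈ A ∩ B, d ((A ∪ B).erase k) = d ((A ∪ B).erase l)) := by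
  obtain ⟨hd0, hd1⟩ := hd
  set T := A ∪ B with hTdef
  have hTcard : T.card = m + 2 := by
    have := Finset.card_union_add_card_inter A B
    rw [hTdef]
    omega
  have hTV : T ⊆ V n := Finset.union_subset hA hB
  have hsdA : (A \ B).card = 1 := by
    have := Finset.card_sdiff_add_card_inter A B
    omega
  have hsdB : (B \ A).card = 1 := by
    have := Finset.card_sdiff_add_card_inter B A
    rw [Finset.inter_comm] at this
    omega
  obtain ⟨b, hb⟩ := Finset.card_eq_one.mp hsdA
  obtain ⟨a, ha⟩ := Finset.card_eq_one.mp hsdB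
  have hbmem : ∀ x, x ∈ A ∧ x ∉ B ↔ x = b := by
    intro x
    have := Finset.ext_iff.mp hb x
    simpa [Finset.mem_sdiff] using this
  have hamem : ∀ x, x ∈ B ∧ x ∉ A ↔ x = a := by
    intro x
    have := Finset.ext_iff.mp ha x
    simpa [Finset.mem_sdiff] using this
  have haB : a ∈ B := ((hamem a).mpr rfl).1
  have haA : a ∉ A := ((hamem a).mpr rfl).2
  have hbA : b ∈ A := ((hbmem b).mpr rfl).1
  have hbB : b ∉ B := ((hbmem b).mpr rfl).2
  have hTins : T = insert a (insert b (A ∩ B)) := by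
    ext x
    simp only [hTdef, Finset.mem_union, Finset.mem_insert, Finset.mem_inter]
    constructor
    · intro hx
      by_cases hxA : x ∈ A <;> by_cases hxB : x ∈ B
      · tauto
      · exact Or.inr (Or.inl ((hbmem x).mp ⟨hxA, hxB⟩))
      · exact Or.inl ((hamem x).mp ⟨hxB, hxA⟩)
      · tauto
    · rintro (rfl | rfl | hx)
      · exact Or.inr haB
      · exact Or.inl hbA
      · exact Or.inl hx.1
  have hne : a ≠ b := fun h => hbB (h ▸ haB)
  have haIns : a ∉ insert b (A ∩ B) := by
    simp only [Finset.mem_insert, Finset.mem_inter]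
    push_neg
    exact ⟨hne, fun h _ => haA h⟩
  have hbIns : b ∉ A ∩ B := by
    simp only [Finset.mem_inter]
    push_neg
    intro _; exact hbB
  have heA : T.erase a = A := by
    have h1 : A ⊆ T.erase a :=
      Finset.subset_erase.mpr ⟨Finset.subset_union_left, haA⟩
    have h2 : (T.erase a).card = m + 1 := by
      rw [Finset.card_erase_of_mem (by exact Finset.mem_union_right _ haB), hTcard]
      omega
    exact (Finset.eq_of_subset_of_card_le h1 (by omega)).symm
  have heB : T.erase b = B := by
    have h1 : B ⊆ T.erase b :=
      Finset.subset_erase.mpr ⟨Finset.subset_union_right, hbB⟩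
    have h2 : (T.erase b).card = m + 1 := by
      rw [Finset.card_erase_of_mem (by exact Finset.mem_union_left _ hbA), hTcard]
      omega
    exact (Finset.eq_of_subset_of_card_le h1 (by omega)).symm
  have hsum : sigmaT d T = ∑ k ∈ A ∩ B, d (T.erase k) := by
    unfold sigmaT
    rw [hTins, Finset.sum_insert haIns, Finset.sum_insert hbIns, ← hTins,
      heA, heB, hdA, hdB]
    ring
  have key : ∀ k ∈ A ∩ B, (m : ℝ) * d (T.erase k) ≤ sigmaT d T := by
    intro k hk
    have hkT : k ∈ T := Finset.mem_union_left _ (Finset.mem_inter.mp hk).1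
    have := hd1 T hTV hTcard k hkT
    have hs : ((m : ℝ) - 1) + 1 = (m : ℝ) := by ring
    rwa [hs] at this
  have hzero : ∑ k ∈ A ∩ B, (sigmaT d T - (m : ℝ) * d (T.erase k)) = 0 := by
    rw [Finset.sum_sub_distrib, Finset.sum_const, hAB, ← Finset.mul_sum, ← hsum,
      nsmul_eq_mul]
    ring
  have heach := (Finset.sum_eq_zero_iff_of_nonneg
    (fun k hk => by linarith [key k hk])).mp hzero
  have hmain : ∀ k ∈ A ∩ B, (m : ℝ) * d (T.erase k) = sigmaT d T := by
    intro k hk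
    have := heach k hk
    linarith
  refine ⟨hmain, fun k hk l hl => ?_⟩
  have hm0 : (m : ℝ) ≠ 0 := by positivity
  have h1 := hmain k hk
  have h2 := hmain l hl
  have : (m : ℝ) * d (T.erase k) = (m : ℝ) * d (T.erase l) := by rw [h1, h2]
  exact mul_left_cancel₀ hm0 this
end

section
/- Let m ≥ 1 and n ≥ m+2 be integers and s > 0 a real number. If d lies on an extreme ray of SMET^{m,s}_n, then its zero-extension d^{ze} lies on an extreme ray of SMET^{m+1,s}_{n+1}. -/
/-- `d` lies on an extreme ray of the cone `C` (whose members are functions on the finsets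
satisfying the predicate `idx`): `d ∈ C`, `d` is nonzero on the relevant index set, and
whenever `d = x + y` with `x, y ∈ C`, both `x` and `y` are nonnegative multiples of `d`
on the relevant index set. -/
def IsExtremeRayOn (C : (Finset ℕ → ℝ) → Prop) (idx : Finset ℕ → Prop)
    (d : Finset ℕ → ℝ) : Prop :=
  C d ∧ (∃ S, idx S ∧ d S ≠ 0) ∧
  ∀ x y : Finset ℕ → ℝ, C x → C y → (∀ S, idx S → d S = x S + y S) →
    ((∃ c : ℝ, 0 ≤ c ∧ ∀ S, idx S → x S = c * d S) ∧
     (∃ c : ℝ, 0 ≤ c ∧ ∀ S, idx S → y S = c * d S))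

/-- The zero-extension of a function `d` on `(m+1)`-subsets of `V n`: a function on
`(m+2)`-subsets `S` of `V (n+1)`, equal to `0` if `S ⊆ V n` and to `d (S.erase (n+1))`
otherwise. -/
def zeroExtension (n : ℕ) (d : Finset ℕ → ℝ) (S : Finset ℕ) : ℝ :=
  if S ⊆ V n then 0 else d (S.erase (n + 1))

/- ### Auxiliary lemmas -/

lemma succ_notMem_V (n : ℕ) : n + 1 ∉ V n := by simp [V]

lemma subset_V_succ {n : ℕ} {S : Finset ℕ} (h : S ⊆ V n) : S ⊆ V (n + 1) := by
  intro a ha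
  have := h ha
  simp only [V, Finset.mem_Icc] at this ⊢
  omega

lemma mem_of_not_subset {n : ℕ} {S : Finset ℕ} (hS : S ⊆ V (n + 1)) (h : ¬ S ⊆ V n) :
    n + 1 ∈ S := by
  by_contra hc
  apply h
  intro a ha
  have h1 := hS ha
  have h2 : a ≠ n + 1 := fun e => hc (e ▸ ha)
  simp only [V, Finset.mem_Icc] at h1 ⊢
  omega

lemma erase_subset_V {n : ℕ} {S : Finset ℕ} (hS : S ⊆ V (n + 1)) :
    S.erase (n + 1) ⊆ V n := by
  intro a ha
  rw [Finset.mem_erase] at ha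
  have := hS ha.2
  simp only [V, Finset.mem_Icc] at this ⊢
  omega

lemma ze_insert {n : ℕ} (d : Finset ℕ → ℝ) {S : Finset ℕ} (hS : S ⊆ V n) :
    zeroExtension n d (insert (n + 1) S) = d S := by
  have h1 : n + 1 ∉ S := fun h => succ_notMem_V n (hS h)
  have h2 : ¬ (insert (n + 1) S ⊆ V n) :=
    fun h => succ_notMem_V n (h (Finset.mem_insert_self _ _))
  simp [zeroExtension, h2, Finset.erase_insert h1]

lemma insert_idx {m n : ℕ} {S : Finset ℕ} (hS : S ⊆ V n) (hc : S.card = m + 1) :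
    insert (n + 1) S ⊆ V (n + 1) ∧ (insert (n + 1) S).card = m + 2 := by
  have h1 : n + 1 ∉ S := fun h => succ_notMem_V n (hS h)
  constructor
  · apply Finset.insert_subset
    · simp only [V, Finset.mem_Icc]; omega
    · exact subset_V_succ hS
  · rw [Finset.card_insert_of_notMem h1, hc]

/-- Expansion of `sigmaT` over `insert (n+1) T` for `T ⊆ V n`. -/
lemma sigmaT_insert {n : ℕ} (x : Finset ℕ → ℝ) {T : Finset ℕ} (hT : T ⊆ V n) :
    sigmaT x (insert (n + 1) T) = x T + ∑ k ∈ T, x (insert (n + 1) (T.erase k)) := by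
  have h1 : n + 1 ∉ T := fun h => succ_notMem_V n (hT h)
  rw [sigmaT, Finset.sum_insert h1, Finset.erase_insert h1]
  congr 1
  apply Finset.sum_congr rfl
  intro k hk
  rw [Finset.erase_insert_of_ne (by rintro rfl; exact h1 hk)]

/-- Pulling a member of `SMET (m+1) (n+1) s` vanishing on `(m+2)`-subsets of `V n`
back to a member of `SMET m n s`. -/
lemma pull_mem {m n : ℕ} {s : ℝ} {x : Finset ℕ → ℝ}
    (hx : inSMET (m + 1) (n + 1) s x)
    (hx0 : ∀ S ⊆ V n, S.card = m + 2 → x S = 0) :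
    inSMET m n s (fun S => x (insert (n + 1) S)) := by
  obtain ⟨hx1, hx2⟩ := hx
  constructor
  · intro S hS hc
    obtain ⟨h1, h2⟩ := insert_idx hS hc
    exact hx1 _ h1 h2
  · intro T hT hc i hi
    have h1 : n + 1 ∉ T := fun h => succ_notMem_V n (hT h)
    have hsub : insert (n + 1) T ⊆ V (n + 1) := by
      apply Finset.insert_subset
      · simp only [V, Finset.mem_Icc]; omega
      · exact subset_V_succ hT
    have hcard : (insert (n + 1) T).card = m + 1 + 2 := by
      rw [Finset.card_insert_of_notMem h1, hc]
    have key := hx2 (insert (n + 1) T) hsub hcard i (Finset.mem_insert_of_mem hi)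
    rw [sigmaT_insert x hT, hx0 T hT hc,
      Finset.erase_insert_of_ne (by rintro rfl; exact h1 hi)] at key
    have : sigmaT (fun S => x (insert (n + 1) S)) T
        = ∑ k ∈ T, x (insert (n + 1) (T.erase k)) := rfl
    rw [this]
    linarith

/-- Membership of the zero-extension in the bigger cone. -/
lemma ze_mem {m n : ℕ} {s : ℝ} (hs : 0 < s) {d : Finset ℕ → ℝ}
    (hd : inSMET m n s d) : inSMET (m + 1) (n + 1) s (zeroExtension n d) := by
  obtain ⟨hd1, hd2⟩ := hd
  constructor
  · intro S hS hc
    by_cases h : S ⊆ V n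
    · simp [zeroExtension, h]
    · have hmem : n + 1 ∈ S := mem_of_not_subset hS h
      have : zeroExtension n d S = d (S.erase (n + 1)) := by simp [zeroExtension, h]
      rw [this]
      exact hd1 _ (erase_subset_V hS)
        (by rw [Finset.card_erase_of_mem hmem, hc]; omega)
  · intro T hT hc i hi
    by_cases h : T ⊆ V n
    · have hz : ∀ k ∈ T, zeroExtension n d (T.erase k) = 0 := by
        intro k hk
        simp [zeroExtension, (Finset.erase_subset k T).trans h]
      rw [sigmaT, Finset.sum_congr rfl hz, Finset.sum_const_zero,
        hz i hi, mul_zero]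
    · -- n + 1 ∈ T
      have hmem : n + 1 ∈ T := mem_of_not_subset hT h
      set T' := T.erase (n + 1) with hT'def
      have hT'sub : T' ⊆ V n := erase_subset_V hT
      have hT'card : T'.card = m + 2 := by
        rw [hT'def, Finset.card_erase_of_mem hmem, hc]; omega
      have hTeq : T = insert (n + 1) T' := (Finset.insert_erase hmem).symm
      have hterm : ∀ k ∈ T', zeroExtension n d (insert (n + 1) (T'.erase k))
          = d (T'.erase k) :=
        fun k hk => ze_insert d ((Finset.erase_subset k T').trans hT'sub)
      have hzeT' : zeroExtension n d T' = 0 := by simp [zeroExtension, hT'sub]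
      have hsig : sigmaT (zeroExtension n d) T = sigmaT d T' := by
        rw [hTeq, sigmaT_insert _ hT'sub, hzeT',
          Finset.sum_congr rfl hterm, zero_add, sigmaT]
      rw [hsig]
      rcases eq_or_ne i (n + 1) with rfl | hne
      · rw [← hT'def, hzeT', mul_zero]
        rw [sigmaT]
        apply Finset.sum_nonneg
        intro k hk
        exact hd1 _ ((Finset.erase_subset k T').trans hT'sub)
          (by rw [Finset.card_erase_of_mem hk, hT'card]; omega)
      · have hi' : i ∈ T' := Finset.mem_erase.mpr ⟨hne, hi⟩
        have : T.erase i = insert (n + 1) (T'.erase i) := by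
          rw [hTeq, Finset.erase_insert_of_ne (fun hh => hne hh.symm)]
        rw [this, ze_insert d ((Finset.erase_subset i T').trans hT'sub)]
        exact hd2 T' hT'sub hT'card i hi'

/-- Zero-extension of any extreme ray of `SMET m n s` is an extreme ray of
`SMET (m+1) (n+1) s`. -/
theorem zeroExtension_extreme (m n : ℕ) (hm : 1 ≤ m) (hn : m + 2 ≤ n)
    (s : ℝ) (hs : 0 < s) (d : Finset ℕ → ℝ)
    (hd : IsExtremeRayOn (inSMET m n s) (fun S => S ⊆ V n ∧ S.card = m + 1) d) :
    IsExtremeRayOn (inSMET (m + 1) (n + 1) s)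
      (fun S => S ⊆ V (n + 1) ∧ S.card = m + 2) (zeroExtension n d) := by
  obtain ⟨hdC, ⟨S₀, ⟨hS₀sub, hS₀card⟩, hS₀ne⟩, hdext⟩ := hd
  refine ⟨ze_mem hs hdC, ⟨insert (n + 1) S₀, insert_idx hS₀sub hS₀card, ?_⟩, ?_⟩
  · rw [ze_insert d hS₀sub]; exact hS₀ne
  · intro x y hx hy hsum
    -- x and y vanish on (m+2)-subsets of V n
    have hvanish : ∀ S ⊆ V n, S.card = m + 2 → x S = 0 ∧ y S = 0 := by
      intro S hS hc
      have hidx : S ⊆ V (n + 1) ∧ S.card = m + 2 := ⟨subset_V_succ hS, hc⟩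
      have h0 : zeroExtension n d S = 0 := by simp [zeroExtension, hS]
      have hsum' := hsum S hidx
      rw [h0] at hsum'
      have hxnn := hx.1 S hidx.1 hidx.2
      have hynn := hy.1 S hidx.1 hidx.2
      constructor <;> linarith
    have hxm := pull_mem hx (fun S hS hc => (hvanish S hS hc).1)
    have hym := pull_mem hy (fun S hS hc => (hvanish S hS hc).2)
    have hdecomp : ∀ S, (S ⊆ V n ∧ S.card = m + 1) →
        d S = x (insert (n + 1) S) + y (insert (n + 1) S) := by
      rintro S ⟨hS, hc⟩
      have := hsum (insert (n + 1) S) (insert_idx hS hc)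
      rwa [ze_insert d hS] at this
    obtain ⟨⟨c1, hc1, hx'⟩, ⟨c2, hc2, hy'⟩⟩ := hdext _ _ hxm hym hdecomp
    -- transfer back
    have transfer : ∀ (z : Finset ℕ → ℝ) (c : ℝ),
        (∀ S ⊆ V n, S.card = m + 2 → z S = 0) →
        (∀ S, (S ⊆ V n ∧ S.card = m + 1) → z (insert (n + 1) S) = c * d S) →
        ∀ S, (S ⊆ V (n + 1) ∧ S.card = m + 2) → z S = c * zeroExtension n d S := by
      rintro z c hz0 hzc S ⟨hS, hc⟩
      by_cases h : S ⊆ V n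
      · rw [hz0 S h hc]
        simp [zeroExtension, h]
      · have hmem : n + 1 ∈ S := mem_of_not_subset hS h
        have hSsub : S.erase (n + 1) ⊆ V n := erase_subset_V hS
        have hScard : (S.erase (n + 1)).card = m + 1 := by
          rw [Finset.card_erase_of_mem hmem, hc]; omega
        have hSeq : insert (n + 1) (S.erase (n + 1)) = S := Finset.insert_erase hmem
        have := hzc (S.erase (n + 1)) ⟨hSsub, hScard⟩
        rw [hSeq] at this
        rw [this]
        congr 1
        rw [← ze_insert d hSsub, hSeq]
    exact ⟨⟨c1, hc1, transfer x c1 (fun S hS hc => (hvanish S hS hc).1) hx'⟩,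
      ⟨c2, hc2, transfer y c2 (fun S hS hc => (hvanish S hS hc).2) hy'⟩⟩
end

section
/- Let m ≥ 1 and n ≥ m+2 be integers. If d lies on an extreme ray of HMET^m_n, then its vertex-splitting d^{vs} lies on an extreme ray of HMET^m_{n+1}. -/
/-- Membership in the cone `HMET m n` of `m`-hemi-metrics: nonnegativity on every
`(m+1)`-subset of `V n`, and the `m`-simplex inequalities. -/
def inHMET (m n : ℕ) (d : Finset ℕ → ℝ) : Prop :=
  (∀ S ⊆ V n, S.card = m + 1 → 0 ≤ d S) ∧
  (∀ T ⊆ V n, T.card = m + 2 → ∀ i ∈ T, 2 * d (T.erase i) ≤ sigmaT d T)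

/-- The vertex-splitting of a function `d` on `(m+1)`-subsets of `V n` (splitting the
vertex `n` into vertices `n` and `n+1`): a function on `(m+1)`-subsets `S` of `V (n+1)`,
equal to `0` if `{n, n+1} ⊆ S`, to `d S` if `S ⊆ V n`, and to
`d (insert n (S.erase (n+1)))` if `n+1 ∈ S` and `n ∉ S`. -/
def vertexSplitting (n : ℕ) (d : Finset ℕ → ℝ) (S : Finset ℕ) : ℝ :=
  if n ∈ S ∧ n + 1 ∈ S then 0
  else if S ⊆ V n then d S
  else d (insert n (S.erase (n + 1)))

lemma mem_V {a n : ℕ} : a ∈ V n ↔ 1 ≤ a ∧ a ≤ n := Finset.mem_Icc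

lemma V_mono {n : ℕ} : V n ⊆ V (n + 1) := Finset.Icc_subset_Icc le_rfl (Nat.le_succ n)

lemma notMem_V {n : ℕ} : n + 1 ∉ V n := by simp [V, Finset.mem_Icc]

lemma subset_V_of_notMem {n : ℕ} {S : Finset ℕ} (hS : S ⊆ V (n + 1)) (h : n + 1 ∉ S) :
    S ⊆ V n := by
  intro a ha
  have h1 := mem_V.mp (hS ha)
  have h2 : a ≠ n + 1 := fun he => h (he ▸ ha)
  exact mem_V.mpr ⟨h1.1, by omega⟩

lemma vs_both {n : ℕ} {d : Finset ℕ → ℝ} {S : Finset ℕ} (h1 : n ∈ S) (h2 : n + 1 ∈ S) :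
    vertexSplitting n d S = 0 := by simp [vertexSplitting, h1, h2]

lemma vs_left {n : ℕ} {d : Finset ℕ → ℝ} {S : Finset ℕ} (h : S ⊆ V n) :
    vertexSplitting n d S = d S := by
  have h2 : n + 1 ∉ S := fun hm => notMem_V (h hm)
  simp [vertexSplitting, h2, h]

lemma vs_right {n : ℕ} {d : Finset ℕ → ℝ} {S : Finset ℕ} (h2 : n + 1 ∈ S) (h1 : n ∉ S) :
    vertexSplitting n d S = d (insert n (S.erase (n + 1))) := by
  have h3 : ¬ S ⊆ V n := fun hs => notMem_V (hs h2)
  simp [vertexSplitting, h1, h3]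

lemma sw_subset {n : ℕ} (hn1 : 1 ≤ n) {S : Finset ℕ} (hS : S ⊆ V (n + 1)) :
    insert n (S.erase (n + 1)) ⊆ V n := by
  intro a ha
  rcases Finset.mem_insert.mp ha with rfl | ha
  · exact mem_V.mpr ⟨hn1, le_rfl⟩
  · have h1 := Finset.mem_of_mem_erase ha
    have h2 := Finset.ne_of_mem_erase ha
    have h3 := mem_V.mp (hS h1)
    exact mem_V.mpr ⟨h3.1, by omega⟩

lemma sw_card {n : ℕ} {S : Finset ℕ} (h2 : n + 1 ∈ S) (h1 : n ∉ S) :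
    (insert n (S.erase (n + 1))).card = S.card := by
  rw [Finset.card_insert_of_notMem (fun h => h1 (Finset.mem_of_mem_erase h)),
      Finset.card_erase_of_mem h2]
  have := Finset.card_pos.mpr ⟨_, h2⟩
  omega

lemma sigma_both {n : ℕ} (f : Finset ℕ → ℝ) {T : Finset ℕ}
    (h1 : n ∈ T) (h2 : n + 1 ∈ T)
    (hz : ∀ k ∈ T, k ≠ n → k ≠ n + 1 → f (T.erase k) = 0) :
    sigmaT f T = f (T.erase n) + f (T.erase (n + 1)) := by
  unfold sigmaT
  rw [← Finset.add_sum_erase _ _ h1,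
      ← Finset.add_sum_erase _ _ (Finset.mem_erase.mpr ⟨by omega, h2⟩)]
  have h0 : ∑ k ∈ (T.erase n).erase (n + 1), f (T.erase k) = 0 := by
    apply Finset.sum_eq_zero
    intro k hk
    have hk2 := Finset.mem_erase.mp hk
    have hk3 := Finset.mem_erase.mp hk2.2
    exact hz k hk3.2 hk3.1 hk2.1
  rw [h0]; ring

lemma vs_erase_eq {n : ℕ} {d : Finset ℕ → ℝ} {T : Finset ℕ} (h2 : n + 1 ∈ T) (h1 : n ∉ T)
    {k : ℕ} (hk : k ∈ T) (hkne : k ≠ n + 1) :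
    vertexSplitting n d (T.erase k) = d ((insert n (T.erase (n + 1))).erase k) := by
  have hkn : k ≠ n := fun he => h1 (he ▸ hk)
  rw [vs_right (Finset.mem_erase.mpr ⟨Ne.symm hkne, h2⟩)
      (fun h => h1 (Finset.mem_of_mem_erase h))]
  congr 1
  rw [Finset.erase_right_comm, Finset.erase_insert_of_ne (Ne.symm hkn)]

lemma sigma_swap {n : ℕ} (d : Finset ℕ → ℝ) {T : Finset ℕ}
    (hT : T ⊆ V (n + 1)) (h2 : n + 1 ∈ T) (h1 : n ∉ T) :
    sigmaT (vertexSplitting n d) T = sigmaT d (insert n (T.erase (n + 1))) := by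
  have hnE : n ∉ T.erase (n + 1) := fun h => h1 (Finset.mem_of_mem_erase h)
  have e1 : (insert n (T.erase (n + 1))).erase n = T.erase (n + 1) := Finset.erase_insert hnE
  unfold sigmaT
  rw [← Finset.add_sum_erase _ _ h2,
      ← Finset.add_sum_erase _ (fun k => d ((insert n (T.erase (n + 1))).erase k))
        (Finset.mem_insert_self n _), e1]
  congr 1
  · rw [vs_left (subset_V_of_notMem ((Finset.erase_subset _ _).trans hT)
      (Finset.notMem_erase _ _))]
  · apply Finset.sum_congr rfl
    intro k hk
    exact vs_erase_eq h2 h1 (Finset.mem_of_mem_erase hk) (Finset.ne_of_mem_erase hk)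

lemma vs_mem {m n : ℕ} (hn1 : 1 ≤ n) {d : Finset ℕ → ℝ} (hd : inHMET m n d) :
    inHMET m (n + 1) (vertexSplitting n d) := by
  constructor
  · intro S hS hcard
    by_cases h2 : n + 1 ∈ S
    · by_cases h1 : n ∈ S
      · rw [vs_both h1 h2]
      · rw [vs_right h2 h1]
        exact hd.1 _ (sw_subset hn1 hS) (by rw [sw_card h2 h1, hcard])
    · have hSn := subset_V_of_notMem hS h2
      rw [vs_left hSn]
      exact hd.1 _ hSn hcard
  · intro T hT hcard i hi
    by_cases h2 : n + 1 ∈ T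
    · by_cases h1 : n ∈ T
      · -- case C : both n and n+1 in T
        have hU : T.erase (n + 1) ⊆ V n :=
          subset_V_of_notMem ((Finset.erase_subset _ _).trans hT) (Finset.notMem_erase _ _)
        have hUcard : (T.erase (n + 1)).card = m + 1 := by
          rw [Finset.card_erase_of_mem h2, hcard]
          omega
        have hUd : 0 ≤ d (T.erase (n + 1)) := hd.1 _ hU hUcard
        have hvn : vertexSplitting n d (T.erase n) = d (T.erase (n + 1)) := by
          rw [vs_right (Finset.mem_erase.mpr ⟨by omega, h2⟩) (Finset.notMem_erase _ _)]
          congr 1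
          rw [Finset.erase_right_comm, Finset.insert_erase (Finset.mem_erase.mpr ⟨by omega, h1⟩)]
        have hvn1 : vertexSplitting n d (T.erase (n + 1)) = d (T.erase (n + 1)) := vs_left hU
        have hsum : sigmaT (vertexSplitting n d) T = 2 * d (T.erase (n + 1)) := by
          rw [sigma_both _ h1 h2 (fun k hk hkn hkn1 =>
            vs_both (Finset.mem_erase.mpr ⟨Ne.symm hkn, h1⟩)
              (Finset.mem_erase.mpr ⟨Ne.symm hkn1, h2⟩)), hvn, hvn1]
          ring
        rw [hsum]
        by_cases hin : i = n
        · subst hin; rw [hvn]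
        · by_cases hin1 : i = n + 1
          · subst hin1; rw [hvn1]
          · rw [vs_both (Finset.mem_erase.mpr ⟨fun h => hin h.symm, h1⟩)
              (Finset.mem_erase.mpr ⟨fun h => hin1 h.symm, h2⟩)]
            linarith
      · -- case B : n+1 ∈ T, n ∉ T
        have hsum := sigma_swap d hT h2 h1
        have hT' : insert n (T.erase (n + 1)) ⊆ V n := sw_subset hn1 hT
        have hcard' : (insert n (T.erase (n + 1))).card = m + 2 := by
          rw [sw_card h2 h1, hcard]
        by_cases hi1 : i = n + 1
        · subst hi1
          have e1 : (insert n (T.erase (n + 1))).erase n = T.erase (n + 1) :=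
            Finset.erase_insert (fun h => h1 (Finset.mem_of_mem_erase h))
          have hv : vertexSplitting n d (T.erase (n + 1)) =
              d ((insert n (T.erase (n + 1))).erase n) := by
            rw [e1]
            exact vs_left (subset_V_of_notMem ((Finset.erase_subset _ _).trans hT)
              (Finset.notMem_erase _ _))
          rw [hsum, hv]
          exact hd.2 _ hT' hcard' n (Finset.mem_insert_self _ _)
        · rw [hsum, vs_erase_eq h2 h1 hi hi1]
          exact hd.2 _ hT' hcard' i
            (Finset.mem_insert_of_mem (Finset.mem_erase.mpr ⟨hi1, hi⟩))
    · -- case A : T ⊆ V n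
      have hTn : T ⊆ V n := subset_V_of_notMem hT h2
      have hsum : sigmaT (vertexSplitting n d) T = sigmaT d T := by
        unfold sigmaT
        exact Finset.sum_congr rfl (fun k _ =>
          vs_left ((Finset.erase_subset _ _).trans hTn))
      rw [hsum, vs_left ((Finset.erase_subset _ _).trans hTn)]
      exact hd.2 T hTn hcard i hi

lemma hmet_swap {m n : ℕ} (hn1 : 1 ≤ n) {x : Finset ℕ → ℝ}
    (hx : inHMET m (n + 1) x)
    (hz : ∀ S, S ⊆ V (n + 1) → S.card = m + 1 → n ∈ S → n + 1 ∈ S → x S = 0)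
    {S : Finset ℕ} (hS : S ⊆ V (n + 1)) (hcard : S.card = m + 1)
    (h2 : n + 1 ∈ S) (h1 : n ∉ S) :
    x S = x (insert n (S.erase (n + 1))) := by
  set T := insert n S with hT
  have hnT : n ∈ T := Finset.mem_insert_self _ _
  have hn1T : n + 1 ∈ T := Finset.mem_insert_of_mem h2
  have hTsub : T ⊆ V (n + 1) := by
    intro a ha
    rcases Finset.mem_insert.mp ha with rfl | ha
    · exact mem_V.mpr ⟨hn1, by omega⟩
    · exact hS ha
  have hTcard : T.card = m + 2 := by rw [Finset.card_insert_of_notMem h1, hcard]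
  have hsum : sigmaT x T = x (T.erase n) + x (T.erase (n + 1)) := by
    apply sigma_both x hnT hn1T
    intro k hk hkn hkn1
    apply hz _ ((Finset.erase_subset _ _).trans hTsub)
    · rw [Finset.card_erase_of_mem hk, hTcard]; omega
    · exact Finset.mem_erase.mpr ⟨Ne.symm hkn, hnT⟩
    · exact Finset.mem_erase.mpr ⟨Ne.symm hkn1, hn1T⟩
  have e1 : T.erase n = S := Finset.erase_insert h1
  have e2 : T.erase (n + 1) = insert n (S.erase (n + 1)) :=
    Finset.erase_insert_of_ne (by omega)
  have i1 := hx.2 T hTsub hTcard n hnT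
  have i2 := hx.2 T hTsub hTcard (n + 1) hn1T
  rw [hsum, e1, e2] at i1 i2
  linarith

lemma key_scale {m n : ℕ} (hn1 : 1 ≤ n) {d x : Finset ℕ → ℝ} {c : ℝ}
    (hx : inHMET m (n + 1) x)
    (hz : ∀ S, S ⊆ V (n + 1) → S.card = m + 1 → n ∈ S → n + 1 ∈ S → x S = 0)
    (hcx : ∀ S, (S ⊆ V n ∧ S.card = m + 1) → x S = c * d S) :
    ∀ S, (S ⊆ V (n + 1) ∧ S.card = m + 1) → x S = c * vertexSplitting n d S := by
  rintro S ⟨hS, hcard⟩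
  by_cases h2 : n + 1 ∈ S
  · by_cases h1 : n ∈ S
    · rw [vs_both h1 h2, hz S hS hcard h1 h2]; ring
    · rw [vs_right h2 h1, hmet_swap hn1 hx hz hS hcard h2 h1,
        hcx _ ⟨sw_subset hn1 hS, by rw [sw_card h2 h1, hcard]⟩]
  · have hSn := subset_V_of_notMem hS h2
    rw [vs_left hSn, hcx _ ⟨hSn, hcard⟩]

/-- Vertex-splitting of any extreme ray of `HMET m n` is an extreme ray of
`HMET m (n+1)`. -/
theorem vertexSplitting_extreme (m n : ℕ) (hm : 1 ≤ m) (hn : m + 2 ≤ n)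
    (d : Finset ℕ → ℝ)
    (hd : IsExtremeRayOn (inHMET m n) (fun S => S ⊆ V n ∧ S.card = m + 1) d) :
    IsExtremeRayOn (inHMET m (n + 1))
      (fun S => S ⊆ V (n + 1) ∧ S.card = m + 1) (vertexSplitting n d) := by
  obtain ⟨hdC, ⟨S₀, ⟨hS₀sub, hS₀card⟩, hS₀ne⟩, hdext⟩ := hd
  have hn1 : 1 ≤ n := by omega
  refine ⟨vs_mem hn1 hdC, ⟨S₀, ⟨hS₀sub.trans V_mono, hS₀card⟩, ?_⟩, ?_⟩
  · rw [vs_left hS₀sub]; exact hS₀ne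
  · intro x y hx hy hxy
    have hz : ∀ S, S ⊆ V (n + 1) → S.card = m + 1 → n ∈ S → n + 1 ∈ S →
        x S = 0 ∧ y S = 0 := by
      intro S hS hc h1 h2
      have h := hxy S ⟨hS, hc⟩
      rw [vs_both h1 h2] at h
      have hx0 := hx.1 S hS hc
      have hy0 := hy.1 S hS hc
      constructor <;> linarith
    have hxr : inHMET m n x := ⟨fun S hS hc => hx.1 S (hS.trans V_mono) hc,
      fun T hT hc i hi => hx.2 T (hT.trans V_mono) hc i hi⟩
    have hyr : inHMET m n y := ⟨fun S hS hc => hy.1 S (hS.trans V_mono) hc,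
      fun T hT hc i hi => hy.2 T (hT.trans V_mono) hc i hi⟩
    have hdec : ∀ S, (S ⊆ V n ∧ S.card = m + 1) → d S = x S + y S := by
      rintro S ⟨hS, hc⟩
      rw [← vs_left (d := d) hS]
      exact hxy S ⟨hS.trans V_mono, hc⟩
    obtain ⟨⟨c, hc0, hcx⟩, ⟨c', hc'0, hcy⟩⟩ := hdext x y hxr hyr hdec
    exact ⟨⟨c, hc0, key_scale hn1 hx (fun S a b cc dd => (hz S a b cc dd).1) hcx⟩,
      ⟨c', hc'0, key_scale hn1 hy (fun S a b cc dd => (hz S a b cc dd).2) hcy⟩⟩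
end

section
/- Let m ≥ 1 be an integer and s a real number with 0 < s < m+1, and consider the cone SMET^{m,s}_{m+2} = { d ∈ ℝ^{m+2} : 0 ≤ (s+1)·d_k ≤ Σ_{i=1}^{m+2} d_i for all k }. A nonzero vector d ∈ SMET^{m,s}_{m+2} lies on an extreme ray of this cone if and only if d is a positive multiple of a vector having exactly ⌊s⌋+1 coordinates equal to 1, one coordinate equal to s−⌊s⌋, and all remaining coordinates equal to 0. -/
/-- The cone `SMET^{m,s}_{m+2}` in coordinates: all `d ∈ ℝ^{m+2}` with
`0 ≤ (s+1)·d k ≤ Σ_i d i` for every `k`. -/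
def smetSimple (m : ℕ) (s : ℝ) (d : Fin (m + 2) → ℝ) : Prop :=
  ∀ k, 0 ≤ (s + 1) * d k ∧ (s + 1) * d k ≤ ∑ i, d i

/-- A nonzero `d` in a convex cone `C ⊆ ℝ^N` lies on an extreme ray of `C` if whenever
`d = x + y` with `x, y ∈ C`, both `x` and `y` are nonnegative scalar multiples of `d`. -/
def IsExtremeRayFin (N : ℕ) (C : (Fin N → ℝ) → Prop) (d : Fin N → ℝ) : Prop :=
  C d ∧ d ≠ 0 ∧ ∀ x y : Fin N → ℝ, C x → C y → d = x + y →
    ((∃ c : ℝ, 0 ≤ c ∧ x = c • d) ∧ (∃ c : ℝ, 0 ≤ c ∧ y = c • d))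

lemma sum_pattern {N : ℕ} (A : Finset (Fin N)) (j : Fin N) (hj : j ∉ A) (f : ℝ) :
    ∑ i, (if i ∈ A then (1:ℝ) else if i = j then f else 0) = A.card + f := by
  classical
  have h : ∀ i : Fin N, (if i ∈ A then (1:ℝ) else if i = j then f else 0)
      = (if i ∈ A then (1:ℝ) else 0) + (if i = j then f else 0) := by
    intro i
    by_cases hA : i ∈ A
    · have hij : i ≠ j := fun h => hj (h ▸ hA)
      simp [hA, hij]
    · simp [hA]
  rw [Finset.sum_congr rfl (fun i _ => h i), Finset.sum_add_distrib]
  simp [Finset.sum_ite_eq']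

set_option maxHeartbeats 2000000 in
/-- A nonzero `d` in the cone `SMET^{m,s}_{m+2}` (for `0 < s < m+1`) lies on an extreme
ray if and only if `d` is a positive multiple of a vector with exactly `⌊s⌋ + 1`
coordinates equal to `1`, one coordinate equal to `s - ⌊s⌋`, and all remaining
coordinates equal to `0`. -/
theorem smetSimple_extreme_iff (m : ℕ) (hm : 1 ≤ m) (s : ℝ)
    (hs0 : 0 < s) (hs1 : s < (m : ℝ) + 1)
    (d : Fin (m + 2) → ℝ) (hd : smetSimple m s d) (hne : d ≠ 0) :
    IsExtremeRayFin (m + 2) (smetSimple m s) d ↔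
      ∃ c : ℝ, 0 < c ∧ ∃ (A : Finset (Fin (m + 2))) (j : Fin (m + 2)),
        j ∉ A ∧ A.card = ⌊s⌋₊ + 1 ∧
        ∀ i, d i = c * (if i ∈ A then 1 else if i = j then s - (⌊s⌋₊ : ℝ) else 0) := by
  classical
  have ht0 : (0:ℝ) < s + 1 := by linarith
  have hts : (s+1 : ℝ) ≠ 0 := ne_of_gt ht0
  have hdnn : ∀ k, 0 ≤ d k := by
    intro k
    have h := (hd k).1
    nlinarith
  have hS0 : 0 < ∑ i, d i := by
    rcases (Finset.sum_nonneg fun i (_ : i ∈ Finset.univ) => hdnn i).lt_or_eq with h | h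
    · exact h
    · exfalso; apply hne; funext k
      have := (Finset.sum_eq_zero_iff_of_nonneg (fun i _ => hdnn i)).mp h.symm k (Finset.mem_univ k)
      simpa using this
  constructor
  · rintro ⟨-, -, hext⟩
    -- Step 1: at most one "middle" coordinate
    have unique_mid : ∀ i₁ i₂ : Fin (m+2), i₁ ≠ i₂ → 0 < d i₁ → (s+1) * d i₁ < ∑ i, d i →
        0 < d i₂ → (s+1) * d i₂ < ∑ i, d i → False := by
      intro i₁ i₂ hne12 h1p h1s h2p h2s
      obtain ⟨S, hSdef⟩ : ∃ S, ∑ i, d i = S := ⟨_, rfl⟩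
      rw [hSdef] at h1s h2s
      have hS0' : 0 < S := hSdef ▸ hS0
      set ε := min (min (d i₁) (d i₂))
        (min ((S - (s+1) * d i₁)/(s+1)) ((S - (s+1) * d i₂)/(s+1))) with hε
      have hε0 : 0 < ε := lt_min (lt_min h1p h2p)
        (lt_min (div_pos (by linarith) ht0) (div_pos (by linarith) ht0))
      have hε1 : ε ≤ d i₁ := (min_le_left _ _).trans (min_le_left _ _)
      have hε2 : ε ≤ d i₂ := (min_le_left _ _).trans (min_le_right _ _)
      have hε3 : ε ≤ (S - (s+1) * d i₁)/(s+1) := (min_le_right _ _).trans (min_le_left _ _)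
      have hε4 : ε ≤ (S - (s+1) * d i₂)/(s+1) := (min_le_right _ _).trans (min_le_right _ _)
      rw [le_div_iff₀ ht0] at hε3 hε4
      set u : Fin (m+2) → ℝ := fun k => if k = i₁ then ε else if k = i₂ then -ε else 0 with hu
      have huval : ∀ k, k ≠ i₁ → k ≠ i₂ → u k = 0 := by
        intro k h1 h2; rw [hu]; simp [h1, h2]
      have hu1 : u i₁ = ε := by rw [hu]; simp
      have hu2 : u i₂ = -ε := by rw [hu]; simp [Ne.symm hne12]
      have hsum_u : ∑ k, u k = 0 := by
        have h : ∀ k : Fin (m+2), u k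
            = (if k = i₁ then ε else 0) + (if k = i₂ then -ε else 0) := by
          intro k
          rcases eq_or_ne k i₁ with h1 | h1
          · subst h1; rw [hu1, if_pos rfl, if_neg hne12]; ring
          · rcases eq_or_ne k i₂ with h2 | h2
            · subst h2; rw [hu2, if_neg h1, if_pos rfl]; ring
            · rw [huval k h1 h2, if_neg h1, if_neg h2]; ring
        rw [Finset.sum_congr rfl (fun k _ => h k), Finset.sum_add_distrib]
        simp
      have hxs : ∀ σ : ℝ, σ = 1 ∨ σ = -1 → smetSimple m s (fun k => (d k + σ * u k)/2) := by
        intro σ hσ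
        have hb1 : σ * ε ≤ ε := by rcases hσ with h | h <;> subst h <;> linarith
        have hb2 : -ε ≤ σ * ε := by rcases hσ with h | h <;> subst h <;> linarith
        have hB1 : (s+1) * (σ * ε) ≤ (s+1) * ε := mul_le_mul_of_nonneg_left hb1 ht0.le
        have hB2 : (s+1) * (-ε) ≤ (s+1) * (σ * ε) := mul_le_mul_of_nonneg_left hb2 ht0.le
        have hsum : ∑ i, (d i + σ * u i)/2 = S/2 := by
          rw [← Finset.sum_div, Finset.sum_add_distrib, ← Finset.mul_sum, hsum_u,
            mul_zero, add_zero, hSdef]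
        intro k
        have hub : (s+1) * d k ≤ S := by rw [← hSdef]; exact (hd k).2
        constructor
        · show 0 ≤ (s+1) * ((d k + σ * u k)/2)
          rcases eq_or_ne k i₁ with h1 | h1
          · subst h1
            rw [hu1]
            have h5 : 0 ≤ (s+1) * (d k - ε) := mul_nonneg ht0.le (by linarith)
            nlinarith [hB2]
          · rcases eq_or_ne k i₂ with h2 | h2
            · subst h2
              rw [hu2]
              have h5 : 0 ≤ (s+1) * (d k - ε) := mul_nonneg ht0.le (by linarith)
              nlinarith [hB1]
            · rw [huval k h1 h2, mul_zero, add_zero]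
              have := (hd k).1
              linarith
        · show (s+1) * ((d k + σ * u k)/2) ≤ ∑ i, (d i + σ * u i)/2
          rw [hsum]
          rcases eq_or_ne k i₁ with h1 | h1
          · subst h1
            rw [hu1]
            nlinarith [hB1, hε3]
          · rcases eq_or_ne k i₂ with h2 | h2
            · subst h2
              rw [hu2]
              nlinarith [hB2, hε4]
            · rw [huval k h1 h2, mul_zero, add_zero]
              linarith
      have hx := hxs 1 (Or.inl rfl)
      have hy := hxs (-1) (Or.inr rfl)
      have hxy : d = (fun k => (d k + 1 * u k)/2) + (fun k => (d k + (-1) * u k)/2) := by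
        funext k
        show d k = (d k + 1 * u k)/2 + (d k + (-1) * u k)/2
        ring
      obtain ⟨⟨cx, hcx0, hcx⟩, -⟩ := hext _ _ hx hy hxy
      have hsumx : ∑ i, (d i + 1 * u i)/2 = S/2 := by
        rw [← Finset.sum_div, Finset.sum_add_distrib, ← Finset.mul_sum, hsum_u,
          mul_zero, add_zero, hSdef]
      have hsx : S/2 = cx * S := by
        have h := congrArg (fun z : Fin (m+2) → ℝ => ∑ i, z i) hcx
        simp only [Pi.smul_apply, smul_eq_mul] at h
        rw [← Finset.mul_sum, hSdef] at h
        rw [hsumx] at h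
        exact h
      have hcx12 : cx = 1/2 := by
        have h0 : (cx - 1/2) * S = 0 := by linear_combination -hsx
        rcases mul_eq_zero.mp h0 with h | h
        · linarith
        · exact absurd h (ne_of_gt hS0')
      have h := congrFun hcx i₁
      simp only [Pi.smul_apply, smul_eq_mul] at h
      rw [hu1, hcx12] at h
      linarith
    -- Step 2: classification
    set A : Finset (Fin (m+2)) := Finset.univ.filter (fun k => (s+1) * d k = ∑ i, d i) with hA
    have hmemA : ∀ k, k ∈ A ↔ (s+1) * d k = ∑ i, d i := by intro k; simp [hA]
    clear_value A
    have hAval : ∀ k ∈ A, d k = (∑ i, d i) / (s+1) := by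
      intro k hk
      rw [eq_div_iff hts]
      rw [hmemA] at hk
      linarith
    have trich : ∀ k, d k = 0 ∨ k ∈ A ∨ (0 < d k ∧ (s+1) * d k < ∑ i, d i) := by
      intro k
      rcases (hdnn k).lt_or_eq with h | h
      · rcases ((hd k).2).lt_or_eq with h2 | h2
        · exact Or.inr (Or.inr ⟨h, h2⟩)
        · exact Or.inr (Or.inl ((hmemA k).mpr h2))
      · exact Or.inl h.symm
    have hsumA : ∑ k ∈ A, d k = A.card * ((∑ i, d i) / (s+1)) := by
      rw [Finset.sum_congr rfl hAval, Finset.sum_const, nsmul_eq_mul]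
    by_cases hmid : ∃ j, 0 < d j ∧ (s+1) * d j < ∑ i, d i
    · obtain ⟨j, hj1, hj2⟩ := hmid
      have hjA : j ∉ A := by rw [hmemA]; exact ne_of_lt hj2
      have hzero : ∀ k, k ∉ A → k ≠ j → d k = 0 := by
        intro k hkA hkj
        rcases trich k with h | h | h
        · exact h
        · exact absurd h hkA
        · exact (unique_mid k j hkj h.1 h.2 hj1 hj2).elim
      have hsplitc : ∑ k ∈ Aᶜ, d k = d j :=
        Finset.sum_eq_single_of_mem j (Finset.mem_compl.mpr hjA)
          (fun k hk hkj => hzero k (Finset.mem_compl.mp hk) hkj)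
      have hS_eq : ∑ i, d i = A.card * ((∑ i, d i)/(s+1)) + d j := by
        conv_lhs => rw [← Finset.sum_add_sum_compl A d]
        rw [hsumA, hsplitc]
      have hdj : d j = ∑ i, d i - A.card * ((∑ i, d i)/(s+1)) := by linarith [hS_eq]
      have hsplit' : (s+1) * d j = (s+1) * (∑ i, d i) - A.card * (∑ i, d i) := by
        rw [hdj]; field_simp
      have hnlt : (A.card : ℝ) < s + 1 := by nlinarith [hsplit', hS0, mul_pos ht0 hj1]
      have hngt : s < (A.card : ℝ) := by nlinarith [hsplit', hS0, hj2]
      have h1 : ⌊s⌋₊ < A.card := (Nat.floor_lt hs0.le).mpr hngt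
      have h2 : A.card ≤ ⌊s⌋₊ + 1 := by
        have h3 : A.card ≤ ⌊s+1⌋₊ := Nat.le_floor hnlt.le
        rwa [Nat.floor_add_one hs0.le] at h3
      have hcardA : A.card = ⌊s⌋₊ + 1 := by omega
      have hfl : (⌊s⌋₊ : ℝ) = (A.card : ℝ) - 1 := by rw [hcardA]; push_cast; ring
      refine ⟨(∑ i, d i)/(s+1), div_pos hS0 ht0, A, j, hjA, hcardA, ?_⟩
      intro i
      by_cases hiA : i ∈ A
      · rw [if_pos hiA, mul_one]; exact hAval i hiA
      · rw [if_neg hiA]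
        by_cases hij : i = j
        · subst hij
          rw [if_pos rfl, hfl, div_mul_eq_mul_div, eq_div_iff hts]
          linear_combination hsplit'
        · rw [if_neg hij, mul_zero]; exact hzero i hiA hij
    · push_neg at hmid
      have hzero : ∀ k, k ∉ A → d k = 0 := by
        intro k hk
        rcases trich k with h | h | h
        · exact h
        · exact absurd h hk
        · exact absurd h.2 (not_lt.mpr (hmid k h.1))
      have hS_eq : ∑ i, d i = A.card * ((∑ i, d i)/(s+1)) := by
        conv_lhs => rw [← Finset.sum_add_sum_compl A d]
        rw [hsumA, Finset.sum_eq_zero (fun k hk => hzero k (Finset.mem_compl.mp hk)), add_zero]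
      have h2 : (s+1) * (∑ i, d i) = A.card * (∑ i, d i) := by
        conv_lhs => rw [hS_eq]
        rw [mul_comm, mul_assoc, div_mul_cancel₀ _ hts]
      have hncard : (A.card : ℝ) = s + 1 := by
        have h3 : ((s+1) - (A.card : ℝ)) * (∑ i, d i) = 0 := by linear_combination h2
        rcases mul_eq_zero.mp h3 with h4 | h4
        · linarith
        · exact absurd h4 (ne_of_gt hS0)
      have hn1 : 1 ≤ A.card := by
        by_contra h
        push_neg at h
        have h5 : A.card = 0 := by omega
        rw [h5] at hncard
        norm_num at hncard
        linarith
      have hcnat : ((A.card - 1 : ℕ) : ℝ) = (A.card : ℝ) - 1 := by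
        rw [Nat.cast_sub hn1]; norm_num
      have hfloor : ⌊s⌋₊ = A.card - 1 := by
        have hs_eq : s = ((A.card - 1 : ℕ) : ℝ) := by rw [hcnat]; linarith
        rw [hs_eq, Nat.floor_natCast]
      have hcardA : A.card = ⌊s⌋₊ + 1 := by omega
      have hfrac : s - (⌊s⌋₊ : ℝ) = 0 := by
        rw [hfloor, hcnat]; linarith
      have hAne : A ≠ Finset.univ := by
        intro h
        rw [h] at hncard
        simp only [Finset.card_univ, Fintype.card_fin] at hncard
        push_cast at hncard
        linarith
      obtain ⟨j, hjA⟩ : ∃ j, j ∉ A := by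
        by_contra h
        push_neg at h
        exact hAne (Finset.eq_univ_iff_forall.mpr h)
      refine ⟨(∑ i, d i)/(s+1), div_pos hS0 ht0, A, j, hjA, hcardA, ?_⟩
      intro i
      by_cases hiA : i ∈ A
      · rw [if_pos hiA, mul_one]; exact hAval i hiA
      · rw [if_neg hiA]
        have hif : (if i = j then s - (⌊s⌋₊:ℝ) else 0) = 0 := by
          rw [hfrac, ite_self]
        rw [hif, mul_zero]
        exact hzero i hiA
  · rintro ⟨c, hc, A, j, hjA, hcard, hform⟩
    have hcardR : (A.card : ℝ) = (⌊s⌋₊ : ℝ) + 1 := by rw [hcard]; push_cast; ring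
    have hSd : ∑ i, d i = c * (s+1) := by
      calc ∑ i, d i
          = ∑ i, c * (if i ∈ A then (1:ℝ) else if i = j then s - ⌊s⌋₊ else 0) :=
            Finset.sum_congr rfl (fun i _ => hform i)
        _ = c * ((A.card : ℝ) + (s - ⌊s⌋₊)) := by rw [← Finset.mul_sum, sum_pattern A j hjA]
        _ = c * (s+1) := by rw [hcardR]; ring
    refine ⟨hd, hne, ?_⟩
    have key : ∀ x y : Fin (m+2) → ℝ, smetSimple m s x → smetSimple m s y → d = x + y →
        ∃ c' : ℝ, 0 ≤ c' ∧ x = c' • d := by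
      intro x y hx hy hxy
      have hxnn : ∀ k, 0 ≤ x k := by intro k; nlinarith [(hx k).1, ht0]
      have hynn : ∀ k, 0 ≤ y k := by intro k; nlinarith [(hy k).1, ht0]
      have hsumsplit : ∑ i, x i + ∑ i, y i = c * (s+1) := by
        rw [← Finset.sum_add_distrib, ← hSd]
        exact Finset.sum_congr rfl (fun i _ => by rw [hxy]; rfl)
      have htight : ∀ k ∈ A, (s+1) * x k = ∑ i, x i := by
        intro k hk
        have hdk : d k = c := by rw [hform k, if_pos hk, mul_one]
        have h3 : x k + y k = c := by rw [← hdk, hxy]; rfl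
        have h4 : (s+1) * (x k + y k) = c * (s+1) := by rw [h3]; ring
        have h1 := (hx k).2
        have h2 := (hy k).2
        nlinarith [h1, h2, h4, hsumsplit]
      have hzero : ∀ k, k ∉ A → k ≠ j → x k = 0 := by
        intro k hkA hkj
        have hdk : d k = 0 := by rw [hform k, if_neg hkA, if_neg hkj, mul_zero]
        have h3 : x k + y k = 0 := by rw [← hdk, hxy]; rfl
        linarith [hxnn k, hynn k]
      have hxA : ∀ k ∈ A, x k = (∑ i, x i)/(s+1) := by
        intro k hk
        rw [eq_div_iff hts]
        linarith [htight k hk]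
      have hsx : ∑ i, x i = A.card * ((∑ i, x i)/(s+1)) + x j := by
        conv_lhs => rw [← Finset.sum_add_sum_compl A x]
        rw [Finset.sum_congr rfl hxA, Finset.sum_const, nsmul_eq_mul]
        congr 1
        exact Finset.sum_eq_single_of_mem j (Finset.mem_compl.mpr hjA)
          (fun k hk hkj => hzero k (Finset.mem_compl.mp hk) hkj)
      have hxj' : x j = ∑ i, x i - A.card * ((∑ i, x i)/(s+1)) := by linarith [hsx]
      have h5 : (s+1) * ((A.card:ℝ) * ((∑ i, x i)/(s+1))) = (A.card:ℝ) * (∑ i, x i) := by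
        rw [mul_comm, mul_assoc, div_mul_cancel₀ _ hts]
      have hxj : (s+1) * x j = (∑ i, x i) * (s - (⌊s⌋₊:ℝ)) := by
        linear_combination (-(s+1)) * hsx - h5 - (∑ i, x i) * hcardR
      have hSxnn : 0 ≤ ∑ i, x i := Finset.sum_nonneg fun i _ => hxnn i
      refine ⟨(∑ i, x i)/((s+1)*c), div_nonneg hSxnn (by positivity), ?_⟩
      funext i
      simp only [Pi.smul_apply, smul_eq_mul]
      rw [hform i]
      by_cases hiA : i ∈ A
      · rw [if_pos hiA, hxA i hiA, mul_one]
        field_simp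
      · rw [if_neg hiA]
        by_cases hij : i = j
        · subst hij
          rw [if_pos rfl, div_mul_eq_mul_div, eq_div_iff (by positivity : (s+1)*c ≠ 0)]
          linear_combination c * hxj
        · rw [if_neg hij, mul_zero, mul_zero]
          exact hzero i hiA hij
    exact fun x y hx hy hxy =>
      ⟨key x y hx hy hxy, key y x hy hx (by rw [hxy]; exact add_comm x y)⟩
end

section
/- Let m ≥ 1 and let s be an integer with 1 ≤ s ≤ m. Let x and y be two distinct 0,1-valued vectors in ℝ^{m+2}, each with exactly s+1 coordinates equal to 1, and let i = |supp(x) ∩ supp(y)| be the number of positions where both equal 1. Consider the linear functionals on ℝ^{m+2} given by f_k(d) = d_k and g_k(d) = Σ_{j=1}^{m+2} d_j − (s+1)·d_k for k = 1,…,m+2 (the defining functionals of the cone SMET^{m,s}_{m+2}). Then the span of the set of those functionals among the f_k and g_k that vanish at both x and y has dimension m + 2i − 2s; in particular this dimension equals m if and only if i = s. -/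
/-- The coordinate functional `f k : d ↦ d k` on `ℝ^{m+2}`. -/
def coordFunctional (m : ℕ) (k : Fin (m + 2)) : (Fin (m + 2) → ℝ) →ₗ[ℝ] ℝ :=
  LinearMap.proj k

/-- The simplex functional `g k : d ↦ (Σ_j d j) - (s+1)·d k` on `ℝ^{m+2}`. -/
noncomputable def simplexFunctional (m s : ℕ) (k : Fin (m + 2)) : (Fin (m + 2) → ℝ) →ₗ[ℝ] ℝ :=
  (∑ j, coordFunctional m j) - ((s : ℝ) + 1) • coordFunctional m k

/-- The support of a vector `x ∈ ℝ^{m+2}`. -/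
noncomputable def suppOf (m : ℕ) (x : Fin (m + 2) → ℝ) : Finset (Fin (m + 2)) :=
  Finset.univ.filter (fun j => x j ≠ 0)

lemma mem_suppOf {m : ℕ} {x : Fin (m+2) → ℝ} {k : Fin (m+2)} :
    k ∈ suppOf m x ↔ x k ≠ 0 := by simp [suppOf]

lemma simplexFunctional_apply (m s : ℕ) (k : Fin (m+2)) (d : Fin (m+2) → ℝ) :
    simplexFunctional m s k d = (∑ j, d j) - ((s:ℝ)+1) * d k := by
  simp [simplexFunctional, coordFunctional]

lemma coordFunctional_apply (m : ℕ) (k : Fin (m+2)) (d : Fin (m+2) → ℝ) :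
    coordFunctional m k d = d k := rfl

lemma sum_eq_card {m : ℕ} {x : Fin (m+2) → ℝ} (hx01 : ∀ j, x j = 0 ∨ x j = 1) :
    ∑ j, x j = ((suppOf m x).card : ℝ) := by
  classical
  rw [← Finset.sum_filter_ne_zero Finset.univ]
  have h1 : ∀ j ∈ suppOf m x, x j = (1:ℝ) := by
    intro j hj
    rcases hx01 j with h | h
    · exact absurd h (mem_suppOf.mp hj)
    · exact h
  rw [show (Finset.filter (fun j => x j ≠ 0) Finset.univ) = suppOf m x from rfl,
    Finset.sum_congr rfl h1, Finset.sum_const, nsmul_eq_mul, mul_one]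

/-- For an integer `1 ≤ s ≤ m` and two distinct `0,1`-vectors `x, y` in `ℝ^{m+2}` with
exactly `s+1` ones each and `i` common ones, the span of the defining functionals of
`SMET^{m,s}_{m+2}` vanishing at both `x` and `y` has dimension `m + 2i - 2s`; in
particular this dimension equals `m` if and only if `i = s`. -/
theorem rank_common_facets (m s : ℕ) (hs1 : 1 ≤ s) (hsm : s ≤ m)
    (x y : Fin (m + 2) → ℝ)
    (hx01 : ∀ j, x j = 0 ∨ x j = 1) (hy01 : ∀ j, y j = 0 ∨ y j = 1)
    (hxcard : (suppOf m x).card = s + 1) (hycard : (suppOf m y).card = s + 1)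
    (hxy : x ≠ y)
    (i : ℕ) (hi : i = (suppOf m x ∩ suppOf m y).card) :
    Module.finrank ℝ (Submodule.span ℝ
        {φ : (Fin (m + 2) → ℝ) →ₗ[ℝ] ℝ |
          (∃ k, φ = coordFunctional m k ∨ φ = simplexFunctional m s k) ∧
          φ x = 0 ∧ φ y = 0}) = m + 2 * i - 2 * s ∧
    (m + 2 * i - 2 * s = m ↔ i = s) := by
  classical
  set A : Finset (Fin (m+2)) := (suppOf m x ∪ suppOf m y)ᶜ with hA
  set B : Finset (Fin (m+2)) := suppOf m x ∩ suppOf m y with hB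
  have hsne : ((s:ℝ) + 1) ≠ 0 := by positivity
  have hx1 : ∀ k, x k = 1 ↔ k ∈ suppOf m x := by
    intro k
    constructor
    · intro h; exact mem_suppOf.mpr (by rw [h]; norm_num)
    · intro h
      rcases hx01 k with h0 | h1
      · exact absurd h0 (mem_suppOf.mp h)
      · exact h1
  have hy1 : ∀ k, y k = 1 ↔ k ∈ suppOf m y := by
    intro k
    constructor
    · intro h; exact mem_suppOf.mpr (by rw [h]; norm_num)
    · intro h
      rcases hy01 k with h0 | h1
      · exact absurd h0 (mem_suppOf.mp h)
      · exact h1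
  have hsumx : ∑ j, x j = ((s:ℝ)+1) := by
    rw [sum_eq_card hx01, hxcard]; push_cast; ring
  have hsumy : ∑ j, y j = ((s:ℝ)+1) := by
    rw [sum_eq_card hy01, hycard]; push_cast; ring
  -- i ≤ s
  have hBx : B ⊆ suppOf m x := Finset.inter_subset_left
  have hBy : B ⊆ suppOf m y := Finset.inter_subset_right
  have hile1 : i ≤ s + 1 := by
    rw [hi, ← hxcard]; exact Finset.card_le_card hBx
  have hile : i ≤ s := by
    rcases Nat.lt_or_ge i (s+1) with h | h
    · omega
    · exfalso
      have hix : B = suppOf m x :=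
        Finset.eq_of_subset_of_card_le hBx (by omega)
      have hiy : B = suppOf m y :=
        Finset.eq_of_subset_of_card_le hBy (by omega)
      apply hxy
      funext j
      rcases hx01 j with h0 | h1 <;> rcases hy01 j with g0 | g1
      · rw [h0, g0]
      · exfalso
        have : j ∈ suppOf m x := by rw [← hix, hiy]; exact (hy1 j).mp g1
        exact (mem_suppOf.mp this) h0
      · exfalso
        have : j ∈ suppOf m y := by rw [← hiy, hix]; exact (hx1 j).mp h1
        exact (mem_suppOf.mp this) g0
      · rw [h1, g1]
  -- cardinalities
  have hU : (suppOf m x ∪ suppOf m y).card + i = 2*(s+1) := by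
    rw [hi, Finset.card_union_add_card_inter, hxcard, hycard]; ring
  have hAcard : A.card + (suppOf m x ∪ suppOf m y).card = m + 2 := by
    rw [hA, Finset.card_compl]
    have := Finset.card_le_univ (suppOf m x ∪ suppOf m y)
    simp only [Fintype.card_fin] at *
    omega
  have hAB : Disjoint A B := by
    rw [Finset.disjoint_left]
    intro a ha hb
    rw [hA, Finset.mem_compl] at ha
    exact ha (Finset.mem_union_left _ (hBx hb))
  -- the family
  set v : ({k // k ∈ A} ⊕ {k // k ∈ B}) → ((Fin (m+2) → ℝ) →ₗ[ℝ] ℝ) :=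
    Sum.elim (fun a => coordFunctional m ↑a) (fun b => simplexFunctional m s ↑b) with hv
  have hmemA : ∀ k : Fin (m+2), k ∈ A ↔ (x k = 0 ∧ y k = 0) := by
    intro k
    rw [hA, Finset.mem_compl, Finset.mem_union]
    constructor
    · intro h
      push_neg at h
      constructor
      · by_contra h'; exact h.1 (mem_suppOf.mpr h')
      · by_contra h'; exact h.2 (mem_suppOf.mpr h')
    · intro ⟨h1, h2⟩
      push_neg
      exact ⟨fun hk => (mem_suppOf.mp hk) h1, fun hk => (mem_suppOf.mp hk) h2⟩
  have hmemB : ∀ k : Fin (m+2), k ∈ B ↔ (x k = 1 ∧ y k = 1) := by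
    intro k
    rw [hB, Finset.mem_inter, ← hx1, ← hy1]
  -- the set equals the range of v
  have hSrange : {φ : (Fin (m + 2) → ℝ) →ₗ[ℝ] ℝ |
          (∃ k, φ = coordFunctional m k ∨ φ = simplexFunctional m s k) ∧
          φ x = 0 ∧ φ y = 0} = Set.range v := by
    ext φ
    constructor
    · rintro ⟨⟨k, hk | hk⟩, hφx, hφy⟩
      · subst hk
        rw [coordFunctional_apply] at hφx hφy
        exact ⟨Sum.inl ⟨k, (hmemA k).mpr ⟨hφx, hφy⟩⟩, rfl⟩
      · subst hk
        rw [simplexFunctional_apply, hsumx] at hφx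
        rw [simplexFunctional_apply, hsumy] at hφy
        have hxk : x k = 1 := by
          have h2 : ((s:ℝ)+1) * (1 - x k) = 0 := by linarith [hφx]
          rcases mul_eq_zero.mp h2 with h | h
          · exact absurd h hsne
          · linarith
        have hyk : y k = 1 := by
          have h2 : ((s:ℝ)+1) * (1 - y k) = 0 := by linarith [hφy]
          rcases mul_eq_zero.mp h2 with h | h
          · exact absurd h hsne
          · linarith
        exact ⟨Sum.inr ⟨k, (hmemB k).mpr ⟨hxk, hyk⟩⟩, rfl⟩
    · rintro ⟨(⟨a, ha⟩ | ⟨b, hb⟩), rfl⟩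
      · obtain ⟨h1, h2⟩ := (hmemA a).mp ha
        exact ⟨⟨a, Or.inl rfl⟩, by simp [hv, coordFunctional_apply, h1, h2]⟩
      · obtain ⟨h1, h2⟩ := (hmemB b).mp hb
        refine ⟨⟨b, Or.inr rfl⟩, ?_, ?_⟩
        · simp [hv, simplexFunctional_apply, hsumx, h1]
        · simp [hv, simplexFunctional_apply, hsumy, h2]
  -- linear independence
  have hLI : LinearIndependent ℝ v := by
    rw [Fintype.linearIndependent_iff]
    intro c hc
    set E : Fin (m+2) → Fin (m+2) → ℝ := fun p q => if q = p then 1 else 0 with hE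
    have hE1 : ∀ p, E p p = 1 := fun p => if_pos rfl
    have hE0 : ∀ p q, q ≠ p → E p q = 0 := fun p q h => if_neg h
    have hone : ∀ p : Fin (m+2), (∑ j, E p j) = 1 := by
      intro p; simp [hE]
    have heval : ∀ p : Fin (m+2),
        (∑ a : {k // k ∈ A}, c (Sum.inl a) * E p (a : Fin (m+2))) +
        (∑ b : {k // k ∈ B}, c (Sum.inr b) *
          (1 - ((s:ℝ)+1) * E p (b : Fin (m+2)))) = 0 := by
      intro p
      have h0 := congrArg (fun φ : (Fin (m+2) → ℝ) →ₗ[ℝ] ℝ => φ (E p)) hc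
      simp only [LinearMap.sum_apply, LinearMap.add_apply, LinearMap.smul_apply,
        LinearMap.zero_apply, smul_eq_mul, Fintype.sum_sum_type, hv, Sum.elim_inl,
        Sum.elim_inr, coordFunctional_apply, simplexFunctional_apply, hone] at h0
      exact h0
    -- T = 0
    have hp : ∃ p : Fin (m+2), p ∉ A ∪ B := by
      by_contra h
      push_neg at h
      have huniv : A ∪ B = Finset.univ := Finset.eq_univ_iff_forall.mpr h
      have h1 : (A ∪ B).card = m + 2 := by rw [huniv]; simp
      have h2 := Finset.card_union_le A B
      rw [hi] at hile1 hile
      omega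
    obtain ⟨p, hp⟩ := hp
    rw [Finset.mem_union] at hp
    push_neg at hp
    have hpA : ∀ a : {k // k ∈ A}, E p (a : Fin (m+2)) = 0 := by
      intro a
      exact hE0 p a (fun h => hp.1 (h ▸ a.2))
    have hpB : ∀ b : {k // k ∈ B}, E p (b : Fin (m+2)) = 0 := by
      intro b
      exact hE0 p b (fun h => hp.2 (h ▸ b.2))
    have hT : (∑ b : {k // k ∈ B}, c (Sum.inr b)) = 0 := by
      have h3 := heval p
      simp only [hpA, hpB, mul_zero, zero_mul, sub_zero, mul_one, Finset.sum_const_zero,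
        zero_add] at h3
      exact h3
    -- c (inr b) = 0
    have hcr : ∀ b0 : {k // k ∈ B}, c (Sum.inr b0) = 0 := by
      intro b0
      have h1 : ∀ a : {k // k ∈ A}, E (b0 : Fin (m+2)) (a : Fin (m+2)) = 0 := by
        intro a
        exact hE0 _ _ (fun h => (Finset.disjoint_left.mp hAB (h ▸ a.2)) b0.2)
      have h2 : ∀ b : {k // k ∈ B},
          E (b0 : Fin (m+2)) (b : Fin (m+2)) = if b = b0 then 1 else 0 := by
        intro b
        by_cases h : b = b0
        · subst h; rw [hE1, if_pos rfl]
        · rw [hE0 _ _ (fun hh => h (Subtype.ext hh)), if_neg h]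
      have h3 := heval (b0 : Fin (m+2))
      simp only [h1, h2, mul_zero, Finset.sum_const_zero, zero_add] at h3
      have h4 : ∀ b : {k // k ∈ B}, c (Sum.inr b) *
          (1 - ((s:ℝ)+1) * if b = b0 then (1:ℝ) else 0)
          = c (Sum.inr b) - (if b = b0 then ((s:ℝ)+1) * c (Sum.inr b) else 0) := by
        intro b
        by_cases h : b = b0 <;> simp [h] <;> ring
      rw [Finset.sum_congr rfl (fun b _ => h4 b), Finset.sum_sub_distrib,
        Finset.sum_ite_eq' Finset.univ b0, if_pos (Finset.mem_univ b0), hT, zero_sub,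
        neg_eq_zero] at h3
      rcases mul_eq_zero.mp h3 with h | h
      · exact absurd h hsne
      · exact h
    have hcl : ∀ a0 : {k // k ∈ A}, c (Sum.inl a0) = 0 := by
      intro a0
      have h1 : ∀ a : {k // k ∈ A},
          E (a0 : Fin (m+2)) (a : Fin (m+2)) = if a = a0 then 1 else 0 := by
        intro a
        by_cases h : a = a0
        · subst h; rw [hE1, if_pos rfl]
        · rw [hE0 _ _ (fun hh => h (Subtype.ext hh)), if_neg h]
      have h2 : ∀ b : {k // k ∈ B}, E (a0 : Fin (m+2)) (b : Fin (m+2)) = 0 := by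
        intro b
        exact hE0 _ _ (fun h => (Finset.disjoint_left.mp hAB a0.2) (h ▸ b.2))
      have h3 := heval (a0 : Fin (m+2))
      simp only [h1, h2, mul_zero, sub_zero, mul_one, mul_ite, hT,
        Finset.sum_ite_eq', Finset.mem_univ, if_true, add_zero] at h3
      exact h3
    intro j
    cases j with
    | inl a => exact hcl a
    | inr b => exact hcr b
  -- conclude
  rw [hSrange]
  have hrank := finrank_span_eq_card hLI
  rw [hrank]
  have hcardsum : Fintype.card ({k // k ∈ A} ⊕ {k // k ∈ B}) = A.card + B.card := by
    simp [Fintype.card_sum]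
  rw [hi] at hile ⊢
  constructor
  · rw [hcardsum]; omega
  · omega
end

section
/- Let m ≥ 1 and n ≥ m+1 be integers, and let (S_1,…,S_{m+1}) be a partition of V_n = {1,…,n} into m+1 nonempty parts. Then the m-partition hemi-metric α(S_1,…,S_{m+1}) lies on an extreme ray of the cone HMET^m_n. -/
/-- The `m`-partition hemi-metric of a partition `P` of `V n` into `m+1` parts: its value
on an `(m+1)`-subset `S` is `1` if `S` meets every part in exactly one element, and `0`
otherwise. -/
def alphaPartition (m : ℕ) (P : Fin (m + 1) → Finset ℕ) (S : Finset ℕ) : ℝ :=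
  if ∀ j, (S ∩ P j).card = 1 then 1 else 0

open Finset

abbrev Trav {m : ℕ} (P : Fin (m + 1) → Finset ℕ) (S : Finset ℕ) : Prop :=
  ∀ j, (S ∩ P j).card = 1

section Aux
variable {m n : ℕ} {P : Fin (m + 1) → Finset ℕ}

lemma alpha_of_trans {S : Finset ℕ} (h : Trav P S) : alphaPartition m P S = 1 := by
  simp [alphaPartition, h]

lemma alpha_of_not_trans {S : Finset ℕ} (h : ¬ Trav P S) : alphaPartition m P S = 0 := by
  simp only [alphaPartition, if_neg h]

lemma alpha_nonneg (S : Finset ℕ) : 0 ≤ alphaPartition m P S := by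
  unfold alphaPartition; split <;> norm_num

variable (hdisj : ∀ j k, j ≠ k → Disjoint (P j) (P k))
  (hcover : Finset.univ.biUnion P = V n)

include hcover in
lemma part_subset (j : Fin (m+1)) : P j ⊆ V n :=
  hcover ▸ subset_biUnion_of_mem P (mem_univ j)

include hcover in
lemma exists_part {v : ℕ} (hv : v ∈ V n) : ∃ p, v ∈ P p := by
  rw [← hcover] at hv
  simpa using hv

include hdisj in
lemma part_unique {v : ℕ} {j k : Fin (m+1)} (hj : v ∈ P j) (hk : v ∈ P k) : j = k := by
  by_contra h
  exact (disjoint_left.mp (hdisj j k h) hj) hk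

include hdisj in
lemma image_inter {f : Fin (m+1) → ℕ} (hf : ∀ j, f j ∈ P j) (q : Fin (m+1)) :
    (image f univ) ∩ P q = {f q} := by
  ext x
  simp only [mem_inter, mem_image, mem_univ, true_and, mem_singleton]
  constructor
  · rintro ⟨⟨j, rfl⟩, hx⟩
    rw [part_unique hdisj (hf j) hx]
  · rintro rfl
    exact ⟨⟨q, rfl⟩, hf q⟩

include hdisj in
lemma choice_inj {f : Fin (m+1) → ℕ} (hf : ∀ j, f j ∈ P j) : Function.Injective f :=
  fun j k h => part_unique hdisj (hf j) (h ▸ hf k)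

include hdisj hcover in
lemma image_trans {f : Fin (m+1) → ℕ} (hf : ∀ j, f j ∈ P j) :
    Trav P (image f univ) := by
  intro q
  rw [image_inter hdisj hf q, card_singleton]

include hcover in
lemma image_subset_V {f : Fin (m+1) → ℕ} (hf : ∀ j, f j ∈ P j) :
    image f univ ⊆ V n := by
  intro x hx
  obtain ⟨j, -, rfl⟩ := mem_image.mp hx
  exact part_subset hcover j (hf j)

include hdisj in
lemma image_card {f : Fin (m+1) → ℕ} (hf : ∀ j, f j ∈ P j) :
    (image f univ).card = m + 1 := by
  rw [card_image_of_injective _ (choice_inj hdisj hf), card_univ, Fintype.card_fin]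

include hdisj hcover in
lemma trans_card {S : Finset ℕ} (hS : S ⊆ V n) (h : Trav P S) : S.card = m + 1 := by
  have hSeq : S = univ.biUnion (fun j => S ∩ P j) := by
    ext s
    simp only [mem_biUnion, mem_univ, true_and, mem_inter]
    constructor
    · intro hs
      obtain ⟨p, hp⟩ := exists_part hcover (hS hs)
      exact ⟨p, hs, hp⟩
    · rintro ⟨p, hs, -⟩; exact hs
  rw [hSeq, card_biUnion]
  · simp [h]
  · intro j _ k _ hjk
    exact (hdisj j k hjk).mono inter_subset_right inter_subset_right

include hdisj hcover in
lemma trans_repr {S : Finset ℕ} (hS : S ⊆ V n) (h : Trav P S) :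
    ∃ f : Fin (m+1) → ℕ, (∀ j, f j ∈ P j) ∧ S = image f univ := by
  have hch : ∀ j, ∃ a, S ∩ P j = {a} := fun j => card_eq_one.mp (h j)
  choose f hfs using hch
  have hmem : ∀ j, f j ∈ S ∩ P j := fun j => (hfs j) ▸ mem_singleton_self _
  refine ⟨f, fun j => (mem_inter.mp (hmem j)).2, ?_⟩
  ext s
  simp only [mem_image, mem_univ, true_and]
  constructor
  · intro hs
    obtain ⟨p, hp⟩ := exists_part hcover (hS hs)
    have : s ∈ S ∩ P p := mem_inter.mpr ⟨hs, hp⟩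
    rw [hfs p, mem_singleton] at this
    exact ⟨p, this.symm⟩
  · rintro ⟨j, rfl⟩
    exact (mem_inter.mp (hmem j)).1

include hdisj hcover in
/-- Key structural lemma: if `T.erase i` is a transversal, there is exactly one other
element `j` of `T` with `T.erase j` a transversal. -/
lemma lemC {T : Finset ℕ} (hT : T ⊆ V n) (hTc : T.card = m + 2) {i : ℕ} (hi : i ∈ T)
    (htr : Trav P (T.erase i)) :
    ∃ j ∈ T, j ≠ i ∧ Trav P (T.erase j) ∧
      ∀ k ∈ T, Trav P (T.erase k) → k = i ∨ k = j := by
  obtain ⟨p, hp⟩ := exists_part hcover (hT hi)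
  obtain ⟨j, hj⟩ := card_eq_one.mp (htr p)
  have hjmem : j ∈ T.erase i ∩ P p := hj ▸ mem_singleton_self _
  obtain ⟨hjT', hjp⟩ := mem_inter.mp hjmem
  have hji : j ≠ i := ne_of_mem_erase hjT'
  have hjT : j ∈ T := mem_of_mem_erase hjT'
  have hTp : T ∩ P p = {i, j} := by
    ext x
    simp only [mem_inter, mem_insert, mem_singleton]
    constructor
    · rintro ⟨hxT, hxp⟩
      by_cases hxi : x = i
      · exact Or.inl hxi
      · have : x ∈ T.erase i ∩ P p := mem_inter.mpr ⟨mem_erase.mpr ⟨hxi, hxT⟩, hxp⟩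
        rw [hj, mem_singleton] at this
        exact Or.inr this
    · rintro (rfl | rfl)
      · exact ⟨hi, hp⟩
      · exact ⟨hjT, hjp⟩
  refine ⟨j, hjT, hji, ?_, ?_⟩
  · intro q
    by_cases hq : q = p
    · subst hq
      have : T.erase j ∩ P q = {i} := by
        rw [erase_inter, hTp, pair_comm, Finset.erase_insert (by simp [hji])]
      rw [this, card_singleton]
    · have hiq : i ∉ P q := fun h => hq (part_unique hdisj h hp)
      have hjq : j ∉ P q := fun h => hq (part_unique hdisj h hjp)
      have h1 : T.erase j ∩ P q = T.erase i ∩ P q := by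
        ext x
        simp only [mem_inter, mem_erase]
        constructor
        · rintro ⟨⟨hxj, hxT⟩, hxq⟩
          exact ⟨⟨fun h => hiq (h ▸ hxq), hxT⟩, hxq⟩
        · rintro ⟨⟨hxi, hxT⟩, hxq⟩
          exact ⟨⟨fun h => hjq (h ▸ hxq), hxT⟩, hxq⟩
      rw [h1, htr q]
  · intro k hk hktr
    by_contra hcon
    push_neg at hcon
    obtain ⟨hki, hkj⟩ := hcon
    have hik : i ∈ T.erase k ∩ P p := mem_inter.mpr ⟨mem_erase.mpr ⟨fun h => hki h.symm, hi⟩, hp⟩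
    have hjk : j ∈ T.erase k ∩ P p := mem_inter.mpr ⟨mem_erase.mpr ⟨fun h => hkj h.symm, hjT⟩, hjp⟩
    have h2 : 2 ≤ (T.erase k ∩ P p).card := by
      have : ({i, j} : Finset ℕ) ⊆ T.erase k ∩ P p := by
        intro x hx
        rcases mem_insert.mp hx with rfl | hx
        · exact hik
        · rw [mem_singleton] at hx; subst hx; exact hjk
      calc 2 = ({i, j} : Finset ℕ).card := (card_pair hji.symm).symm
        _ ≤ _ := card_le_card this
    rw [hktr p] at h2
    omega

/-- If `d` vanishes on all erases except at `a` and `b`, then `sigmaT` is the sum of two terms. -/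
lemma sum_split (d : Finset ℕ → ℝ) {T : Finset ℕ} {a b : ℕ} (ha : a ∈ T) (hb : b ∈ T)
    (hab : a ≠ b) (hz : ∀ k ∈ T, k ≠ a → k ≠ b → d (T.erase k) = 0) :
    sigmaT d T = d (T.erase a) + d (T.erase b) := by
  unfold sigmaT
  rw [← Finset.add_sum_erase _ _ ha]
  have hb' : b ∈ T.erase a := mem_erase.mpr ⟨hab.symm, hb⟩
  rw [← Finset.add_sum_erase _ _ hb']
  have h0 : ∑ k ∈ (T.erase a).erase b, d (T.erase k) = 0 := by
    apply Finset.sum_eq_zero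
    intro k hk
    obtain ⟨hkb, hk2⟩ := mem_erase.mp hk
    obtain ⟨hka, hkT⟩ := mem_erase.mp hk2
    exact hz k hkT hka hkb
  rw [h0]; ring

/-- Cone members with two "live" erases take equal values on them. -/
lemma lemE {d : Finset ℕ → ℝ} (hd : inHMET m n d) {T : Finset ℕ} (hT : T ⊆ V n)
    (hTc : T.card = m + 2) {a b : ℕ} (ha : a ∈ T) (hb : b ∈ T) (hab : a ≠ b)
    (hz : ∀ k ∈ T, k ≠ a → k ≠ b → d (T.erase k) = 0) :
    d (T.erase a) = d (T.erase b) := by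
  have hs := sum_split d ha hb hab hz
  have h1 := hd.2 T hT hTc a ha
  have h2 := hd.2 T hT hTc b hb
  rw [hs] at h1 h2
  linarith

include hdisj hcover in
lemma alpha_mem : inHMET m n (alphaPartition m P) := by
  constructor
  · intro S _ _; exact alpha_nonneg S
  · intro T hT hTc i hi
    by_cases h : Trav P (T.erase i)
    · obtain ⟨j, hjT, hji, hjtr, huniq⟩ := lemC hdisj hcover hT hTc hi h
      have hz : ∀ k ∈ T, k ≠ i → k ≠ j → alphaPartition m P (T.erase k) = 0 := by
        intro k hk hki hkj
        apply alpha_of_not_trans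
        intro htr
        rcases huniq k hk htr with rfl | rfl
        · exact hki rfl
        · exact hkj rfl
      rw [sum_split _ hi hjT (fun hh => hji hh.symm) hz, alpha_of_trans h, alpha_of_trans hjtr]
      norm_num
    · rw [alpha_of_not_trans h]
      have : 0 ≤ sigmaT (alphaPartition m P) T :=
        Finset.sum_nonneg fun k _ => alpha_nonneg _
      linarith

include hdisj hcover in
lemma connect (x : Finset ℕ → ℝ)
    (hswap : ∀ T ⊆ V n, T.card = m + 2 → ∀ a ∈ T, ∀ b ∈ T, a ≠ b →
      Trav P (T.erase a) → Trav P (T.erase b) → x (T.erase a) = x (T.erase b)) :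
    ∀ (k : ℕ) (f g : Fin (m+1) → ℕ), (∀ j, f j ∈ P j) → (∀ j, g j ∈ P j) →
      (univ.filter fun j => f j ≠ g j).card ≤ k →
      x (image f univ) = x (image g univ) := by
  intro k
  induction k with
  | zero =>
    intro f g hf hg hc
    have : ∀ j, f j = g j := by
      intro j
      by_contra h
      have hmem : j ∈ univ.filter fun j => f j ≠ g j := mem_filter.mpr ⟨mem_univ j, h⟩
      have := card_pos.mpr ⟨j, hmem⟩
      omega
    rw [funext this]
  | succ k ih =>
    intro f g hf hg hc
    by_cases hcard : (univ.filter fun j => f j ≠ g j) = ∅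
    · have : ∀ j, f j = g j := by
        intro j
        by_contra h
        have hmem : j ∈ univ.filter fun j => f j ≠ g j := mem_filter.mpr ⟨mem_univ j, h⟩
        rw [hcard] at hmem
        exact notMem_empty _ hmem
      rw [funext this]
    · obtain ⟨j₀, hj₀⟩ := nonempty_iff_ne_empty.mpr hcard
      have hj₀ne : f j₀ ≠ g j₀ := (mem_filter.mp hj₀).2
      set a := f j₀ with ha
      set b := g j₀ with hb
      set f' := Function.update f j₀ b with hf'
      have hf'c : ∀ j, f' j ∈ P j := by
        intro j
        by_cases h : j = j₀
        · subst h
          simpa [hf', hb] using hg j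
        · simpa [hf', Function.update_of_ne h] using hf j
      have hbni : b ∉ image f univ := by
        intro hmem
        obtain ⟨j, -, hj⟩ := mem_image.mp hmem
        have hbPj : b ∈ P j := by rw [← hj]; exact hf j
        have hbPj₀ : b ∈ P j₀ := by rw [hb]; exact hg j₀
        have hjj : j = j₀ := part_unique hdisj hbPj hbPj₀
        apply hj₀ne
        rw [ha, ← hjj]
        exact hj
      set T := insert b (image f univ) with hT
      have hTcard : T.card = m + 2 := by
        rw [hT, card_insert_of_notMem hbni, image_card hdisj hf]
      have hTV : T ⊆ V n := by
        rw [hT]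
        exact insert_subset (part_subset hcover j₀ (hg j₀)) (image_subset_V hcover hf)
      have haT : a ∈ T := mem_insert_of_mem (mem_image.mpr ⟨j₀, mem_univ _, rfl⟩)
      have hbT : b ∈ T := mem_insert_self _ _
      have heb : T.erase b = image f univ := by rw [hT, erase_insert hbni]
      have hea : T.erase a = image f' univ := by
        ext z
        simp only [hT, mem_erase, mem_insert, mem_image, mem_univ, true_and]
        constructor
        · rintro ⟨hza, (rfl | ⟨j, rfl⟩)⟩
          · exact ⟨j₀, by simp [hf']⟩
          · have hjj₀ : j ≠ j₀ := by rintro rfl; exact hza rfl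
            exact ⟨j, by simp [hf', Function.update_of_ne hjj₀]⟩
        · rintro ⟨j, rfl⟩
          by_cases h : j = j₀
          · subst h
            refine ⟨?_, Or.inl (by simp [hf'])⟩
            simpa [hf'] using fun h => hj₀ne h.symm
          · rw [hf', Function.update_of_ne h]
            refine ⟨?_, Or.inr ⟨j, rfl⟩⟩
            intro heq
            exact h (choice_inj hdisj hf heq)
      have htra : Trav P (T.erase a) := by
        rw [hea]; exact image_trans hdisj hcover hf'c
      have htrb : Trav P (T.erase b) := by
        rw [heb]; exact image_trans hdisj hcover hf
      have hstep : x (image f univ) = x (image f' univ) := by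
        rw [← heb, ← hea]
        exact (hswap T hTV hTcard a haT b hbT hj₀ne htra htrb).symm
      have hsub : (univ.filter fun j => f' j ≠ g j) ⊆
          (univ.filter fun j => f j ≠ g j).erase j₀ := by
        intro j hj
        have hne : f' j ≠ g j := (mem_filter.mp hj).2
        have hjj₀ : j ≠ j₀ := by
          rintro rfl
          exact hne (by simp [hf', hb])
        refine mem_erase.mpr ⟨hjj₀, mem_filter.mpr ⟨mem_univ _, ?_⟩⟩
        rwa [hf', Function.update_of_ne hjj₀] at hne
      have hcc : (univ.filter fun j => f' j ≠ g j).card ≤ k := by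
        have h1 := card_le_card hsub
        have h2 : ((univ.filter fun j => f j ≠ g j).erase j₀).card
            = (univ.filter fun j => f j ≠ g j).card - 1 := card_erase_of_mem hj₀
        have h3 := card_pos.mpr ⟨j₀, hj₀⟩
        omega
      rw [hstep, ih f' g hf'c hg hcc]

include hdisj hcover in
lemma half (hne : ∀ j, (P j).Nonempty) (x y : Finset ℕ → ℝ)
    (hx : inHMET m n x) (hy : inHMET m n y)
    (hsum : ∀ S, (S ⊆ V n ∧ S.card = m + 1) → alphaPartition m P S = x S + y S) :
    ∃ c : ℝ, 0 ≤ c ∧ ∀ S, (S ⊆ V n ∧ S.card = m + 1) →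
      x S = c * alphaPartition m P S := by
  have hvan : ∀ S, S ⊆ V n → S.card = m + 1 → ¬ Trav P S → x S = 0 := by
    intro S hSV hSc htr
    have h0 := hsum S ⟨hSV, hSc⟩
    rw [alpha_of_not_trans htr] at h0
    have hx0 := hx.1 S hSV hSc
    have hy0 := hy.1 S hSV hSc
    linarith
  have hswap : ∀ T ⊆ V n, T.card = m + 2 → ∀ a ∈ T, ∀ b ∈ T, a ≠ b →
      Trav P (T.erase a) → Trav P (T.erase b) → x (T.erase a) = x (T.erase b) := by
    intro T hTV hTc a haT b hbT hab htra htrb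
    obtain ⟨j, hjT, hja, hjtr, huniq⟩ := lemC hdisj hcover hTV hTc haT htra
    have hjb : j = b := by
      rcases huniq b hbT htrb with rfl | h
      · exact absurd rfl hab
      · exact h.symm
    subst hjb
    apply lemE hx hTV hTc haT hbT hab
    intro k hk hka hkb
    apply hvan _ ((erase_subset _ _).trans hTV)
    · rw [card_erase_of_mem hk, hTc]
      omega
    · intro htr
      rcases huniq k hk htr with rfl | rfl
      · exact hka rfl
      · exact hkb rfl
  set f₀ : Fin (m+1) → ℕ := fun j => (hne j).choose with hf₀def
  have hf₀ : ∀ j, f₀ j ∈ P j := fun j => (hne j).choose_spec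
  refine ⟨x (image f₀ univ),
    hx.1 _ (image_subset_V hcover hf₀) (image_card hdisj hf₀), ?_⟩
  rintro S ⟨hSV, hSc⟩
  by_cases htr : Trav P S
  · obtain ⟨g, hg, hSeq⟩ := trans_repr hdisj hcover hSV htr
    rw [alpha_of_trans htr, mul_one, hSeq]
    exact (connect hdisj hcover x hswap _ f₀ g hf₀ hg le_rfl).symm
  · rw [alpha_of_not_trans htr, mul_zero]
    exact hvan S hSV hSc htr

end Aux

theorem alphaPartition_extreme' (m n : ℕ) (hm : 1 ≤ m) (hn : m + 1 ≤ n)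
    (P : Fin (m + 1) → Finset ℕ)
    (hne : ∀ j, (P j).Nonempty)
    (hdisj : ∀ j k, j ≠ k → Disjoint (P j) (P k))
    (hcover : Finset.univ.biUnion P = V n) :
    (inHMET m n (alphaPartition m P)) ∧
    (∃ S, (S ⊆ V n ∧ S.card = m + 1) ∧ alphaPartition m P S ≠ 0) ∧
    ∀ x y : Finset ℕ → ℝ, inHMET m n x → inHMET m n y →
      (∀ S, (S ⊆ V n ∧ S.card = m + 1) → alphaPartition m P S = x S + y S) →
      ((∃ c : ℝ, 0 ≤ c ∧ ∀ S, (S ⊆ V n ∧ S.card = m + 1) →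
          x S = c * alphaPartition m P S) ∧
       (∃ c : ℝ, 0 ≤ c ∧ ∀ S, (S ⊆ V n ∧ S.card = m + 1) →
          y S = c * alphaPartition m P S)) := by
  refine ⟨alpha_mem hdisj hcover, ?_, ?_⟩
  · set f₀ : Fin (m+1) → ℕ := fun j => (hne j).choose with hf₀def
    have hf₀ : ∀ j, f₀ j ∈ P j := fun j => (hne j).choose_spec
    refine ⟨image f₀ univ,
      ⟨image_subset_V hcover hf₀, image_card hdisj hf₀⟩, ?_⟩
    rw [alpha_of_trans (image_trans hdisj hcover hf₀)]
    norm_num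
  · intro x y hx hy hsum
    constructor
    · exact half hdisj hcover hne x y hx hy hsum
    · apply half hdisj hcover hne y x hy hx
      intro S hS
      rw [hsum S hS]
      ring

/-- The `m`-partition hemi-metrics lie on extreme rays of the cone `HMET m n`. -/
theorem alphaPartition_extreme (m n : ℕ) (hm : 1 ≤ m) (hn : m + 1 ≤ n)
    (P : Fin (m + 1) → Finset ℕ)
    (hne : ∀ j, (P j).Nonempty)
    (hdisj : ∀ j k, j ≠ k → Disjoint (P j) (P k))
    (hcover : Finset.univ.biUnion P = V n) :
    IsExtremeRayOn (inHMET m n) (fun S => S ⊆ V n ∧ S.card = m + 1)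
      (alphaPartition m P) := by
  exact alphaPartition_extreme' m n hm hn P hne hdisj hcover
end

section
/- Let m ≥ 1 and n ≥ m+2 be integers, and define v on the (m+1)-element subsets S of V_n by v(S) = 1 if 1 ∈ S and v(S) = 0 if 1 ∉ S. Then v lies on an extreme ray of the cone SMET^{m,m}_n. -/
/-- The vector equal to `1` on `(m+1)`-subsets containing the vertex `1` and `0`
elsewhere. -/
def oneVertexRay (S : Finset ℕ) : ℝ := if 1 ∈ S then 1 else 0

lemma sigma_oneVertexRay (m : ℕ) {T : Finset ℕ} (hc : T.card = m + 2) (h1 : 1 ∈ T) :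
    sigmaT oneVertexRay T = (m : ℝ) + 1 := by
  unfold sigmaT
  rw [← Finset.add_sum_erase _ _ h1]
  have h0 : oneVertexRay (T.erase 1) = 0 := by
    unfold oneVertexRay; rw [if_neg (Finset.notMem_erase 1 T)]
  rw [h0, zero_add]
  have hone : ∀ k ∈ T.erase 1, oneVertexRay (T.erase k) = 1 := by
    intro k hk
    have hk1 : k ≠ 1 := Finset.ne_of_mem_erase hk
    unfold oneVertexRay
    rw [if_pos (Finset.mem_erase.mpr ⟨fun h => hk1 h.symm, h1⟩)]
  rw [Finset.sum_congr rfl hone, Finset.sum_const, Finset.card_erase_of_mem h1, hc]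
  simp

lemma oneVertexRay_mem (m n : ℕ) : inSMET m n (m : ℝ) oneVertexRay := by
  constructor
  · intro S _ _
    unfold oneVertexRay; split <;> norm_num
  · intro T _ hc i hi
    by_cases h1 : 1 ∈ T
    · rw [sigma_oneVertexRay m hc h1]
      unfold oneVertexRay
      by_cases hi1 : i = 1
      · rw [if_neg (by simp [hi1]), mul_zero]
        positivity
      · rw [if_pos (Finset.mem_erase.mpr ⟨fun h => hi1 h.symm, h1⟩), mul_one]
    · have hz : ∀ k ∈ T, oneVertexRay (T.erase k) = 0 := by
        intro k _
        unfold oneVertexRay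
        exact if_neg (fun h => h1 (Finset.mem_of_mem_erase h))
      unfold sigmaT
      rw [Finset.sum_eq_zero hz, hz i hi, mul_zero]

lemma oneVertexRay_half (m n : ℕ) (hm : 1 ≤ m) (hn : m + 2 ≤ n) (x y : Finset ℕ → ℝ)
    (hx : inSMET m n (m : ℝ) x) (hy : inSMET m n (m : ℝ) y)
    (hxy : ∀ S, (S ⊆ V n ∧ S.card = m + 1) → oneVertexRay S = x S + y S) :
    ∃ c : ℝ, 0 ≤ c ∧ ∀ S, (S ⊆ V n ∧ S.card = m + 1) → x S = c * oneVertexRay S := by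
  -- x vanishes on sets not containing 1
  have h0 : ∀ S, S ⊆ V n → S.card = m + 1 → 1 ∉ S → x S = 0 := by
    intro S hS hc h1
    have hv : oneVertexRay S = 0 := if_neg h1
    have := hxy S ⟨hS, hc⟩
    have hx0 := hx.1 S hS hc
    have hy0 := hy.1 S hS hc
    linarith
  -- equality in simplex inequalities
  have heq : ∀ T, T ⊆ V n → T.card = m + 2 → 1 ∈ T → ∀ i ∈ T, i ≠ 1 →
      ((m : ℝ) + 1) * x (T.erase i) = sigmaT x T := by
    intro T hT hc h1 i hi hi1
    have hsum : sigmaT oneVertexRay T = sigmaT x T + sigmaT y T := by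
      unfold sigmaT
      rw [← Finset.sum_add_distrib]
      refine Finset.sum_congr rfl fun k hk => ?_
      exact hxy _ ⟨(Finset.erase_subset _ _).trans hT,
        by rw [Finset.card_erase_of_mem hk, hc]; omega⟩
    have hv1 : oneVertexRay (T.erase i) = 1 :=
      if_pos (Finset.mem_erase.mpr ⟨fun h => hi1 h.symm, h1⟩)
    have hvsum : sigmaT oneVertexRay T = (m : ℝ) + 1 := sigma_oneVertexRay m hc h1
    have hve := hxy (T.erase i) ⟨(Finset.erase_subset _ _).trans hT,
      by rw [Finset.card_erase_of_mem hi, hc]; omega⟩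
    have e1 := hx.2 T hT hc i hi
    have e2 := hy.2 T hT hc i hi
    nlinarith [e1, e2]
  -- swapping one element preserves x
  have hswap : ∀ S a b, S ⊆ V n → S.card = m + 1 → 1 ∈ S → a ∈ S → a ≠ 1 →
      b ∈ V n → b ∉ S → x S = x (insert b (S.erase a)) := by
    intro S a b hS hc h1 ha ha1 hbV hbS
    set T := insert b S with hTdef
    have hTsub : T ⊆ V n := Finset.insert_subset hbV hS
    have hTc : T.card = m + 2 := by
      rw [Finset.card_insert_of_notMem hbS, hc]
    have h1T : 1 ∈ T := Finset.mem_insert_of_mem h1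
    have hb1 : b ≠ 1 := fun h => hbS (h ▸ h1)
    have haT : a ∈ T := Finset.mem_insert_of_mem ha
    have e1 := heq T hTsub hTc h1T b (Finset.mem_insert_self b S) hb1
    have e2 := heq T hTsub hTc h1T a haT ha1
    have hab : b ≠ a := fun h => hbS (h ▸ ha)
    have hTb : T.erase b = S := Finset.erase_insert hbS
    have hTa : T.erase a = insert b (S.erase a) := Finset.erase_insert_of_ne hab
    rw [hTb] at e1
    rw [hTa] at e2
    have hpos : (0 : ℝ) < (m : ℝ) + 1 := by positivity
    have := e1.trans e2.symm
    exact mul_left_cancel₀ (ne_of_gt hpos) this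
  -- connectivity
  have key : ∀ k : ℕ, ∀ S S' : Finset ℕ, S ⊆ V n → S.card = m + 1 → 1 ∈ S →
      S' ⊆ V n → S'.card = m + 1 → 1 ∈ S' → (S' \ S).card ≤ k → x S = x S' := by
    intro k
    induction k with
    | zero =>
      intro S S' hS hc h1 hS' hc' h1' hk
      have hemp : S' \ S = ∅ := Finset.card_eq_zero.mp (Nat.le_zero.mp hk)
      have hsub : S' ⊆ S := Finset.sdiff_eq_empty_iff_subset.mp hemp
      rw [Finset.eq_of_subset_of_card_le hsub (by rw [hc, hc'])]
    | succ k ih =>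
      intro S S' hS hc h1 hS' hc' h1' hk
      by_cases hemp : S' \ S = ∅
      · have hsub : S' ⊆ S := Finset.sdiff_eq_empty_iff_subset.mp hemp
        rw [Finset.eq_of_subset_of_card_le hsub (by rw [hc, hc'])]
      · obtain ⟨b, hb⟩ := Finset.nonempty_iff_ne_empty.mpr hemp
        have hbS' : b ∈ S' := (Finset.mem_sdiff.mp hb).1
        have hbS : b ∉ S := (Finset.mem_sdiff.mp hb).2
        have hne : (S \ S').Nonempty := by
          rw [← Finset.card_pos, Finset.card_sdiff_comm (by rw [hc, hc'])]
          exact Finset.card_pos.mpr ⟨b, hb⟩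
        obtain ⟨a, ha⟩ := hne
        have haS : a ∈ S := (Finset.mem_sdiff.mp ha).1
        have haS' : a ∉ S' := (Finset.mem_sdiff.mp ha).2
        have ha1 : a ≠ 1 := fun h => haS' (h ▸ h1')
        set S₁ := insert b (S.erase a) with hS₁def
        have hS₁sub : S₁ ⊆ V n :=
          Finset.insert_subset (hS' hbS') ((Finset.erase_subset _ _).trans hS)
        have hbSe : b ∉ S.erase a := fun h => hbS (Finset.mem_of_mem_erase h)
        have hS₁c : S₁.card = m + 1 := by
          rw [Finset.card_insert_of_notMem hbSe, Finset.card_erase_of_mem haS, hc]; omega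
        have h1S₁ : 1 ∈ S₁ :=
          Finset.mem_insert_of_mem (Finset.mem_erase.mpr ⟨ha1.symm, h1⟩)
        have step : x S = x S₁ := hswap S a b hS hc h1 haS ha1 (hS' hbS') hbS
        have hsub2 : S' \ S₁ ⊆ (S' \ S).erase b := by
          intro z hz
          obtain ⟨hz1, hz2⟩ := Finset.mem_sdiff.mp hz
          have hzb : z ≠ b := fun h => hz2 (h ▸ Finset.mem_insert_self b _)
          have hzS : z ∉ S := by
            intro hzS
            have hza : z ≠ a := fun h => haS' (h ▸ hz1)
            exact hz2 (Finset.mem_insert_of_mem (Finset.mem_erase.mpr ⟨hza, hzS⟩))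
          exact Finset.mem_erase.mpr ⟨hzb, Finset.mem_sdiff.mpr ⟨hz1, hzS⟩⟩
        have hcard2 : (S' \ S₁).card ≤ k := by
          have h1' := Finset.card_le_card hsub2
          rw [Finset.card_erase_of_mem hb] at h1'
          omega
        exact step.trans (ih S₁ S' hS₁sub hS₁c h1S₁ hS' hc' h1' hcard2)
  -- conclude
  set S₀ : Finset ℕ := Finset.Icc 1 (m + 1) with hS₀def
  have hS₀sub : S₀ ⊆ V n := Finset.Icc_subset_Icc le_rfl (by omega)
  have hS₀c : S₀.card = m + 1 := by rw [hS₀def, Nat.card_Icc]; omega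
  have h1S₀ : 1 ∈ S₀ := Finset.mem_Icc.mpr ⟨le_rfl, by omega⟩
  refine ⟨x S₀, hx.1 S₀ hS₀sub hS₀c, fun S ⟨hS, hc⟩ => ?_⟩
  by_cases h1 : 1 ∈ S
  · have := key (S₀ \ S).card S S₀ hS hc h1 hS₀sub hS₀c h1S₀ le_rfl
    rw [this]
    unfold oneVertexRay
    rw [if_pos h1, mul_one]
  · rw [h0 S hS hc h1]
    unfold oneVertexRay
    rw [if_neg h1, mul_zero]

/-- The vector `oneVertexRay` lies on an extreme ray of the cone `SMET m n m` of
`(m,m)`-super-metrics. -/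
theorem oneVertexRay_extreme (m n : ℕ) (hm : 1 ≤ m) (hn : m + 2 ≤ n) :
    IsExtremeRayOn (inSMET m n (m : ℝ)) (fun S => S ⊆ V n ∧ S.card = m + 1)
      oneVertexRay := by
  refine ⟨oneVertexRay_mem m n, ?_, ?_⟩
  · refine ⟨Finset.Icc 1 (m + 1), ⟨Finset.Icc_subset_Icc le_rfl (by omega),
      by rw [Nat.card_Icc]; omega⟩, ?_⟩
    unfold oneVertexRay
    rw [if_pos (Finset.mem_Icc.mpr ⟨le_rfl, by omega⟩)]
    norm_num
  · intro x y hx hy hxy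
    refine ⟨oneVertexRay_half m n hm hn x y hx hy hxy,
      oneVertexRay_half m n hm hn y x hy hx fun S hS => ?_⟩
    rw [hxy S hS]; ring
end
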